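/- arXiv:1810.06382 — 5 statements merged into one kernel-verified Lean document; each statement's English description precedes it below -/
import Mathlib

section
/- Let Ω be a measurable space, let I be a countable set, let A = (A_i)_{i∈I} be an Ω^I-valued random variable with law P, and let (K_n)_{n≥0} be an increasing sequence of finite subsets of I with ⋃_{n≥0} K_n = I. If A is tail-trivial, then for every measurable set 𝒜 ⊆ Ω^I with P(A ∈ 𝒜) > 0, the quantity sup{ |P(A ∈ 𝒜 and A ∈ ℬ) − P(A ∈ 𝒜)·P(A ∈ ℬ)| : ℬ a measurable set belonging to ℱ_{I∖K_n} } converges to 0 as n → ∞. -/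
open MeasureTheory Filter
open scoped RealInnerProductSpace

/-- The sub-σ-algebra of the product σ-algebra on `I → Ω` consisting of events depending
only on the coordinates in `J`. -/
def cylAlg (Ω : Type*) [m : MeasurableSpace Ω] {I : Type*} (J : Set I) :
    MeasurableSpace (I → Ω) :=
  ⨆ i ∈ J, MeasurableSpace.comap (fun f => f i) m

/-- The tail σ-algebra of `I → Ω`: the intersection of the σ-algebras `cylAlg Ω J`
over all `J ⊆ I` with finite complement. -/
def tailAlg (Ω : Type*) [MeasurableSpace Ω] (I : Type*) : MeasurableSpace (I → Ω) :=
  ⨅ (J : Set I) (_ : Jᶜ.Finite), cylAlg Ω J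


lemma trivial_ae_const {α : Type*} [m0 : MeasurableSpace α] (μ : Measure α)
    [IsProbabilityMeasure μ] {m : MeasurableSpace α} (hm : m ≤ m0)
    (htriv : ∀ s : Set α, MeasurableSet[m] s → μ s = 0 ∨ μ s = 1)
    {h : α → ℝ} (hh : Measurable[m] h) :
    ∃ c : ℝ, h =ᵐ[μ] fun _ => c := by
  have hms : ∀ r : ℝ, MeasurableSet[m0] {x | h x ≤ r} := fun r =>
    hm _ (hh (measurableSet_Iic : MeasurableSet (Set.Iic r)))
  have h01 : ∀ r : ℝ, μ {x | h x ≤ r} = 0 ∨ μ {x | h x ≤ r} = 1 := fun r =>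
    htriv _ (hh (measurableSet_Iic : MeasurableSet (Set.Iic r)))
  set T : Set ℚ := {q | μ {x | h x ≤ (q : ℝ)} = 1} with hT
  have hcompl0 : ∀ r : ℝ, μ {x | h x ≤ r} = 1 → μ {x | ¬ h x ≤ r} = 0 := by
    intro r hr
    have : ({x | ¬ h x ≤ r} : Set α) = {x | h x ≤ r}ᶜ := rfl
    rw [this, prob_compl_eq_one_sub (hms r), hr, tsub_self]
  -- T is nonempty
  have hTne : T.Nonempty := by
    by_contra hc
    have hz : ∀ n : ℕ, μ {x | h x ≤ ((n : ℚ) : ℝ)} = 0 := by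
      intro n
      rcases h01 ((n : ℚ) : ℝ) with h' | h'
      · exact h'
      · exact absurd (⟨(n : ℚ), h'⟩ : T.Nonempty) hc
    have hun : (⋃ n : ℕ, {x | h x ≤ ((n : ℚ) : ℝ)}) = Set.univ := by
      ext x
      simp only [Set.mem_iUnion, Set.mem_setOf_eq, Set.mem_univ, iff_true]
      obtain ⟨n, hn⟩ := exists_nat_ge (h x)
      exact ⟨n, by exact_mod_cast hn⟩
    have : μ (Set.univ) = 0 := by
      rw [← hun]; exact measure_iUnion_null hz
    simp at this
  -- lower bound
  have hbdd : BddBelow ((↑) '' T : Set ℝ) := by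
    obtain ⟨n, hn⟩ : ∃ n : ℕ, μ {x | h x ≤ -(n : ℝ)} = 0 := by
      by_contra hc
      push_neg at hc
      have hone : ∀ n : ℕ, μ {x | ¬ h x ≤ -(n : ℝ)} = 0 := by
        intro n
        rcases h01 (-(n : ℝ)) with h' | h'
        · exact absurd h' (hc n)
        · exact hcompl0 _ h'
      have hun : (⋃ n : ℕ, {x | ¬ h x ≤ -(n : ℝ)}) = Set.univ := by
        ext x
        simp only [Set.mem_iUnion, Set.mem_setOf_eq, Set.mem_univ, iff_true, not_le]
        obtain ⟨n, hn⟩ := exists_nat_gt (-(h x))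
        exact ⟨n, by linarith⟩
      have : μ Set.univ = 0 := by rw [← hun]; exact measure_iUnion_null hone
      simp at this
    refine ⟨-(n : ℝ), ?_⟩
    rintro r ⟨q, hq, rfl⟩
    by_contra hlt
    push_neg at hlt
    have hsub : μ {x | h x ≤ (q : ℝ)} ≤ μ {x | h x ≤ -(n : ℝ)} :=
      measure_mono fun x hx => le_trans hx hlt.le
    rw [hn, hq] at hsub
    simp at hsub
  have hTne' : (((↑) '' T : Set ℝ)).Nonempty := hTne.image _
  set c : ℝ := sInf ((↑) '' T : Set ℝ) with hc
  refine ⟨c, ?_⟩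
  have h_le : ∀ᵐ x ∂μ, h x ≤ c := by
    rw [ae_iff]
    have hsub : {x | ¬ h x ≤ c} ⊆ ⋃ q : T, {x | ¬ h x ≤ ((q : ℚ) : ℝ)} := by
      intro x hx
      simp only [Set.mem_setOf_eq, not_le] at hx
      obtain ⟨r, ⟨q, hq, rfl⟩, hr⟩ := (csInf_lt_iff hbdd hTne').mp hx
      exact Set.mem_iUnion.mpr ⟨⟨q, hq⟩, by simp only [Set.mem_setOf_eq, not_le]; exact hr⟩
    exact measure_mono_null hsub (measure_iUnion_null fun q => hcompl0 _ q.2)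
  have h_ge : ∀ᵐ x ∂μ, c ≤ h x := by
    rw [ae_iff]
    have hsub : {x | ¬ c ≤ h x} ⊆ ⋃ q : {q : ℚ // (q : ℝ) < c}, {x | h x ≤ ((q : ℚ) : ℝ)} := by
      intro x hx
      simp only [Set.mem_setOf_eq, not_le] at hx
      obtain ⟨q, hq1, hq2⟩ := exists_rat_btwn hx
      exact Set.mem_iUnion.mpr ⟨⟨q, hq2⟩, hq1.le⟩
    refine measure_mono_null hsub (measure_iUnion_null fun q => ?_)
    rcases h01 ((q : ℚ) : ℝ) with h' | h'
    · exact h'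
    · exact absurd q.2 (not_lt.mpr (csInf_le hbdd ⟨(q : ℚ), h', rfl⟩))
  filter_upwards [h_le, h_ge] with x h1 h2
  exact le_antisymm h1 h2


lemma condexp_L1_tendsto {α : Type*} [m0 : MeasurableSpace α] (μ : Measure α)
    [IsProbabilityMeasure μ] (m : ℕ → MeasurableSpace α) (hle : ∀ n, m n ≤ m0)
    (hanti : Antitone m)
    (htriv : ∀ s : Set α, MeasurableSet[⨅ n, m n] s → μ s = 0 ∨ μ s = 1)
    (𝒜 : Set α) (h𝒜 : MeasurableSet 𝒜) :
    Tendsto (fun n => ∫ x, |(μ[𝒜.indicator (fun _ => (1:ℝ)) | m n]) x - (μ 𝒜).toReal| ∂μ)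
      atTop (nhds 0) := by
  haveI hsf : ∀ n, SigmaFinite (μ.trim (hle n)) := fun n => inferInstance
  set f : α → ℝ := 𝒜.indicator (fun _ => (1:ℝ)) with hf
  have hf_int : Integrable f μ := (integrable_const (1:ℝ)).indicator h𝒜
  set g : ℕ → α → ℝ := fun n => μ[f | m n] with hg
  set c : ℝ := (μ 𝒜).toReal with hcdef
  have hg_int : ∀ n, Integrable (g n) μ := fun n => integrable_condExp
  have hg_meas : ∀ n, StronglyMeasurable[m n] (g n) := fun n => stronglyMeasurable_condExp
  have hg0 : ∀ n, 0 ≤ᵐ[μ] g n := fun n =>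
    condExp_nonneg (Filter.Eventually.of_forall fun x => Set.indicator_nonneg (fun _ _ => zero_le_one) x)
  have hg1 : ∀ n, g n ≤ᵐ[μ] fun _ => (1:ℝ) := by
    intro n
    have h1 : g n ≤ᵐ[μ] μ[(fun _ => (1:ℝ)) | m n] :=
      condExp_mono hf_int (integrable_const 1)
        (Filter.Eventually.of_forall fun x => Set.indicator_le_self' (fun _ _ => zero_le_one) x)
    calc g n ≤ᵐ[μ] μ[(fun _ => (1:ℝ)) | m n] := h1
      _ =ᵐ[μ] fun _ => (1:ℝ) := by rw [condExp_const (hle n)]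
  have hgabs : ∀ n, ∀ᵐ x ∂μ, ‖g n x‖ ≤ 1 := by
    intro n
    filter_upwards [hg0 n, hg1 n] with x h0 h1
    simp only [Pi.zero_apply] at h0
    rw [Real.norm_eq_abs, abs_le]
    exact ⟨by linarith, h1⟩
  have hmem : ∀ n, MemLp (g n) 2 μ :=
    fun n => MemLp.of_bound (hg_int n).aestronglyMeasurable 1 (hgabs n)
  have hmul_int : ∀ n N, Integrable (fun x => g n x * g N x) μ := fun n N =>
    Integrable.bdd_mul (hg_int N) (hg_int n).aestronglyMeasurable (hgabs n)
  set q : ℕ → ℝ := fun n => ∫ x, g n x ^ 2 ∂μ with hq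
  have hsq_int : ∀ n, Integrable (fun x => g n x ^ 2) μ := fun n => (hmem n).integrable_sq
  -- cross term
  have hcross : ∀ n N, n ≤ N → ∫ x, g n x * g N x ∂μ = q N := by
    intro n N hnN
    have htower : μ[g n | m N] =ᵐ[μ] g N := condExp_condExp_of_le (hanti hnN) (hle n)
    have hpull : μ[(fun x => g N x * g n x) | m N] =ᵐ[μ] fun x => g N x * (μ[g n | m N]) x := by
      have := condExp_mul_of_stronglyMeasurable_left (μ := μ) (m := m N) (g := g n) (hg_meas N)
        (hmul_int N n) (hg_int n)
      exact this
    have h1 : ∫ x, g n x * g N x ∂μ = ∫ x, (μ[(fun x => g N x * g n x) | m N]) x ∂μ := by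
      rw [integral_condExp (hle N)]
      simp_rw [mul_comm]
    rw [h1, integral_congr_ae hpull]
    refine integral_congr_ae ?_
    filter_upwards [htower] with x hx
    rw [hx]; ring
  have hqn : ∀ k, ∫ x, g k x ^ 2 ∂μ = q k := fun k => rfl
  have hkey : ∀ n N, n ≤ N → ∫ x, (g n x - g N x) ^ 2 ∂μ = q n - q N := by
    intro n N hnN
    have hint1 : Integrable (fun x => g n x ^ 2 - 2 * (g n x * g N x)) μ :=
      (hsq_int n).sub ((hmul_int n N).const_mul 2)
    have hexp : ∫ x, (g n x - g N x) ^ 2 ∂μ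
        = ∫ x, (g n x ^ 2 - 2 * (g n x * g N x)) + g N x ^ 2 ∂μ :=
      integral_congr_ae (Filter.Eventually.of_forall fun x => by ring)
    rw [hexp, integral_add hint1 (hsq_int N),
      integral_sub (hsq_int n) ((hmul_int n N).const_mul 2), integral_const_mul,
      hcross n N hnN, hqn n, hqn N]
    ring
  have hq_nonneg : ∀ n, 0 ≤ q n := fun n => integral_nonneg fun x => sq_nonneg _
  have hq_anti : Antitone q := by
    intro n N hnN
    have h1 : 0 ≤ ∫ x, (g n x - g N x) ^ 2 ∂μ := integral_nonneg fun x => sq_nonneg _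
    have h2 := hkey n N hnN
    linarith
  have hq_conv : ∃ l, Tendsto q atTop (nhds l) := by
    rcases tendsto_of_antitone hq_anti with h | h
    · exfalso
      obtain ⟨n, hn⟩ := (tendsto_atBot.mp h (-1)).exists
      linarith [hq_nonneg n]
    · exact h
  obtain ⟨l, hl⟩ := hq_conv
  have hq_cauchy : CauchySeq q := hl.cauchySeq
  -- Lp setup
  set F : ℕ → Lp ℝ 2 μ := fun n => (hmem n).toLp (g n) with hF
  have hFnorm : ∀ n N, ‖F n - F N‖ ^ 2 = ∫ x, (g n x - g N x) ^ 2 ∂μ := by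
    intro n N
    have h1 : ((F n - F N : Lp ℝ 2 μ) : α → ℝ) =ᵐ[μ] fun x => g n x - g N x := by
      filter_upwards [Lp.coeFn_sub (F n) (F N), (hmem n).coeFn_toLp, (hmem N).coeFn_toLp]
        with x h1 h2 h3
      rw [h1]; simp [hF, h2, h3]
    have h2 : (inner (𝕜 := ℝ) (F n - F N) (F n - F N)) = ∫ x, (g n x - g N x) ^ 2 ∂μ := by
      rw [L2.inner_def]
      refine integral_congr_ae ?_
      filter_upwards [h1] with x hx
      rw [hx]
      simp only [RCLike.inner_apply, conj_trivial]
      ring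
    rw [← h2, real_inner_self_eq_norm_sq]
  have hF_cauchy : CauchySeq F := by
    rw [Metric.cauchySeq_iff]
    intro ε hε
    obtain ⟨N0, hN0⟩ := Metric.cauchySeq_iff.mp hq_cauchy (ε ^ 2) (by positivity)
    refine ⟨N0, fun a ha b hb => ?_⟩
    wlog hab : b ≤ a generalizing a b
    · rw [dist_comm]; exact this b hb a ha (le_of_not_ge hab)
    have h1 : ‖F b - F a‖ ^ 2 = q b - q a := by rw [hFnorm b a, hkey b a hab]
    have h2 : |q b - q a| < ε ^ 2 := by
      have := hN0 b hb a ha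
      rwa [Real.dist_eq] at this
    have h3 : ‖F b - F a‖ ^ 2 < ε ^ 2 := by
      rw [h1]
      calc q b - q a ≤ |q b - q a| := le_abs_self _
        _ < ε ^ 2 := h2
    have h4 : ‖F b - F a‖ < ε := by nlinarith [norm_nonneg (F b - F a)]
    rw [dist_eq_norm, ← norm_neg]
    simpa using h4
  obtain ⟨G, hG⟩ := cauchySeq_tendsto_of_complete hF_cauchy
  set Gf : α → ℝ := ⇑G with hGf
  -- convergence of eLpNorms
  have heq : ∀ n, eLpNorm (fun x => g n x - Gf x) 2 μ = ENNReal.ofReal ‖F n - G‖ := by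
    intro n
    have h1 : (fun x => g n x - Gf x) =ᵐ[μ] ((F n - G : Lp ℝ 2 μ) : α → ℝ) := by
      filter_upwards [Lp.coeFn_sub (F n) G, (hmem n).coeFn_toLp] with x h1 h2
      rw [h1]; simp [hF, h2, hGf]
    rw [eLpNorm_congr_ae h1, Lp.norm_def,
      ENNReal.ofReal_toReal (Lp.eLpNorm_ne_top (F n - G))]
  have heLp : Tendsto (fun n => eLpNorm (fun x => g n x - Gf x) 2 μ) atTop (nhds 0) := by
    simp_rw [heq]
    have : Tendsto (fun n => ‖F n - G‖) atTop (nhds 0) :=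
      tendsto_iff_norm_sub_tendsto_zero.mp hG
    have h2 := (ENNReal.continuous_ofReal.tendsto 0).comp this
    simpa [Function.comp_def, ofReal_norm_eq_enorm] using h2
  have hTIM : TendstoInMeasure μ (fun n => g n) atTop Gf :=
    tendstoInMeasure_of_tendsto_eLpNorm (by norm_num)
      (fun n => (hg_int n).aestronglyMeasurable) (Lp.aestronglyMeasurable G) heLp
  obtain ⟨ns, hns_mono, hns_ae⟩ := hTIM.exists_seq_tendsto_ae
  -- limsup function
  set h : α → ℝ := fun x => Filter.limsup (fun k => g (ns k) x) atTop with hhdef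
  have hh_meas : Measurable[⨅ n, m n] h := by
    intro t ht
    rw [MeasurableSpace.measurableSet_iInf]
    intro N
    have hN : Measurable[m N] h := by
      have hrw : h = fun x => Filter.limsup (fun k => g (ns (k + N)) x) atTop := by
        funext x
        exact (Filter.limsup_nat_add (fun k => g (ns k) x) N).symm
      rw [hrw]
      refine Measurable.limsup fun k => ?_
      have hle' : m (ns (k + N)) ≤ m N := hanti (le_trans (Nat.le_add_left N k) hns_mono.le_apply)
      exact ((hg_meas (ns (k + N))).mono hle').measurable
    exact hN ht
  have hh_ae : Gf =ᵐ[μ] h := by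
    filter_upwards [hns_ae] with x hx
    exact (hx.limsup_eq).symm
  obtain ⟨c₀, hc₀⟩ := trivial_ae_const μ ((iInf_le m 0).trans (hle 0)) htriv hh_meas
  have hGc : Gf =ᵐ[μ] fun _ => c₀ := hh_ae.trans hc₀
  have h_ae_tendsto : ∀ᵐ x ∂μ, Tendsto (fun k => g (ns k) x) atTop (nhds c₀) := by
    filter_upwards [hns_ae, hGc] with x h1 h2
    rw [h2] at h1
    exact h1
  have hint_g : ∀ n, ∫ x, g n x ∂μ = c := by
    intro n
    rw [hg, integral_condExp (hle n), hf, integral_indicator_const _ h𝒜]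
    simp [hcdef, Measure.real]
  have hc₀c : c₀ = c := by
    have hdom : Tendsto (fun k => ∫ x, g (ns k) x ∂μ) atTop (nhds (∫ _x, c₀ ∂μ)) := by
      refine tendsto_integral_of_dominated_convergence (fun _ => (1:ℝ))
        (fun k => (hg_int (ns k)).aestronglyMeasurable) (integrable_const 1)
        (fun k => hgabs (ns k)) h_ae_tendsto
    have h1 : (∫ _x : α, c₀ ∂μ) = c₀ := by simp
    rw [h1] at hdom
    have h2 : Tendsto (fun _k : ℕ => c) atTop (nhds c) := tendsto_const_nhds
    have h3 : (fun k => ∫ x, g (ns k) x ∂μ) = fun _k => c := funext fun k => hint_g (ns k)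
    rw [h3] at hdom
    exact tendsto_nhds_unique hdom h2
  -- the goal
  set ε : ℕ → ℝ := fun n => ∫ x, |(μ[f|m n]) x - c| ∂μ with hε
  have hεeq : ∀ n, ε n = ∫ x, |g n x - c| ∂μ := fun n => rfl
  have hε_nonneg : ∀ n, 0 ≤ ε n := fun n => integral_nonneg fun x => abs_nonneg _
  have hε_anti : Antitone ε := by
    intro n N hnN
    have htower : μ[g n | m N] =ᵐ[μ] g N := condExp_condExp_of_le (hanti hnN) (hle n)
    have hsub : μ[(g n - fun _ => c) | m N] =ᵐ[μ] fun x => g N x - c := by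
      have h1 := condExp_sub (μ := μ) (m := m N) (hg_int n) (integrable_const c)
      have h2 : μ[(fun _ => c) | m N] = fun _ => c := condExp_const (hle N) c
      filter_upwards [h1, htower] with x hx1 hx2
      rw [hx1]
      simp only [Pi.sub_apply, h2, hx2]
    have h1 : ε N = ∫ x, |(μ[(g n - fun _ => c) | m N]) x| ∂μ := by
      rw [hεeq N]
      refine integral_congr_ae ?_
      filter_upwards [hsub] with x hx
      rw [hx]
    rw [h1, hεeq n]
    calc ∫ x, |(μ[(g n - fun _ => c) | m N]) x| ∂μ
        ≤ ∫ x, |(g n - fun _ => c : α → ℝ) x| ∂μ := integral_abs_condExp_le _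
      _ = ∫ x, |g n x - c| ∂μ :=
        integral_congr_ae (Filter.Eventually.of_forall fun x => rfl)
  have hε_sub : Tendsto (fun k => ε (ns k)) atTop (nhds 0) := by
    simp only [funext hεeq]
    have := tendsto_integral_of_dominated_convergence (μ := μ)
      (F := fun k => fun x => |g (ns k) x - c|) (f := fun _ => (0:ℝ)) (fun _ => (2:ℝ))
      (fun k => ((hg_int (ns k)).sub (integrable_const c)).abs.aestronglyMeasurable)
      (integrable_const 2) ?_ ?_
    · simpa using this
    · intro k
      filter_upwards [hgabs (ns k)] with x hx
      rw [Real.norm_eq_abs, abs_abs]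
      have hc1 : |c| ≤ 1 := by
        rw [hcdef, abs_of_nonneg ENNReal.toReal_nonneg]
        simpa using ENNReal.toReal_mono ENNReal.one_ne_top (prob_le_one (μ := μ) (s := 𝒜))
      calc |g (ns k) x - c| ≤ |g (ns k) x| + |c| := abs_sub _ _
        _ ≤ 1 + 1 := add_le_add hx hc1
        _ = 2 := by norm_num
    · filter_upwards [h_ae_tendsto] with x hx
      have : Tendsto (fun k => |g (ns k) x - c|) atTop (nhds (|c₀ - c|)) :=
        ((hx.sub_const c).abs)
      rw [hc₀c] at this
      simpa using this
  rcases tendsto_of_antitone hε_anti with h' | h'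
  · exfalso
    obtain ⟨n, hn⟩ := (tendsto_atBot.mp h' (-1)).exists
    linarith [hε_nonneg n]
  · obtain ⟨l', hl'⟩ := h'
    have h1 : Tendsto (fun k => ε (ns k)) atTop (nhds l') :=
      hl'.comp (hns_mono.tendsto_atTop)
    have : l' = 0 := tendsto_nhds_unique h1 hε_sub
    rwa [this] at hl'


theorem stmt0 {Ω : Type*} [MeasurableSpace Ω] {I : Type*} [Countable I]
    {α : Type*} [MeasurableSpace α] (P : Measure α) [IsProbabilityMeasure P]
    (A : α → I → Ω) (hA : Measurable A)
    (K : ℕ → Finset I) (hmono : Monotone K) (hcov : (⋃ n, (K n : Set I)) = Set.univ)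
    (htriv : ∀ S : Set (I → Ω), MeasurableSet[tailAlg Ω I] S →
      P (A ⁻¹' S) = 0 ∨ P (A ⁻¹' S) = 1)
    (𝒜 : Set (I → Ω)) (h𝒜 : MeasurableSet 𝒜) (hpos : 0 < P (A ⁻¹' 𝒜)) :
    Tendsto
      (fun n => ⨆ (B : Set (I → Ω)) (_ : MeasurableSet[cylAlg Ω ((K n : Set I)ᶜ)] B),
        |(P (A ⁻¹' 𝒜 ∩ A ⁻¹' B)).toReal - (P (A ⁻¹' 𝒜)).toReal * (P (A ⁻¹' B)).toReal|)
      atTop (nhds 0) := by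
  set μ : Measure (I → Ω) := P.map A with hμ
  haveI : IsProbabilityMeasure μ := Measure.isProbabilityMeasure_map hA.aemeasurable
  set m : ℕ → MeasurableSpace (I → Ω) := fun n => cylAlg Ω ((K n : Set I)ᶜ) with hm
  have hcyl_le : ∀ J : Set I, cylAlg Ω J ≤ MeasurableSpace.pi := by
    intro J
    refine iSup₂_le fun i _ => ?_
    intro s hs
    obtain ⟨t, ht, rfl⟩ := hs
    exact measurable_pi_apply i ht
  have hle : ∀ n, m n ≤ (inferInstance : MeasurableSpace (I → Ω)) := fun n => hcyl_le _
  have hcyl_mono : ∀ J J' : Set I, J ⊆ J' → cylAlg Ω J ≤ cylAlg Ω J' := by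
    intro J J' hJJ
    unfold cylAlg
    exact iSup_le fun i => iSup_le fun hi =>
      le_iSup₂ (f := fun j (_ : j ∈ J') =>
        MeasurableSpace.comap (fun g : I → Ω => g j) (inferInstance : MeasurableSpace Ω))
        i (hJJ hi)
  have hanti : Antitone m := by
    intro a b hab
    exact hcyl_mono _ _ (Set.compl_subset_compl.mpr (by exact_mod_cast hmono hab))
  have hinf_le_tail : (⨅ n, m n) ≤ tailAlg Ω I := by
    refine le_iInf fun J => le_iInf fun hJ => ?_
    have hex : ∀ i : I, ∃ n, i ∈ (K n : Set I) := by
      intro i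
      have : i ∈ ⋃ n, (K n : Set I) := by rw [hcov]; trivial
      exact Set.mem_iUnion.mp this
    choose φ hφ using hex
    set N : ℕ := hJ.toFinset.sup φ with hN
    have hsub : Jᶜ ⊆ (K N : Set I) := by
      intro i hi
      have h1 : φ i ≤ N := Finset.le_sup (hJ.mem_toFinset.mpr hi)
      exact hmono h1 (hφ i)
    refine le_trans (iInf_le m N) (hcyl_mono _ _ ?_)
    rwa [← Set.compl_subset_comm] at hsub
  have htriv' : ∀ s : Set (I → Ω), MeasurableSet[⨅ n, m n] s → μ s = 0 ∨ μ s = 1 := by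
    intro s hs
    have hs_tail : MeasurableSet[tailAlg Ω I] s := hinf_le_tail s hs
    have hs_amb : MeasurableSet s := by
      refine ((iInf_le m 0).trans (hle 0)) s hs
    rw [hμ, Measure.map_apply hA hs_amb]
    exact htriv s hs_tail
  have hεto0 := condexp_L1_tendsto μ m hle hanti htriv' 𝒜 h𝒜
  set f : (I → Ω) → ℝ := 𝒜.indicator (fun _ => (1:ℝ)) with hf
  have hf_int : Integrable f μ := (integrable_const (1:ℝ)).indicator h𝒜
  set c : ℝ := (μ 𝒜).toReal with hcdef
  set ε : ℕ → ℝ := fun n => ∫ x, |(μ[f | m n]) x - c| ∂μ with hε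
  have hε_nonneg : ∀ n, 0 ≤ ε n := fun n => integral_nonneg fun x => abs_nonneg _
  haveI hsf : ∀ n, SigmaFinite (μ.trim (hle n)) := fun n => inferInstance
  -- transfer P-probabilities to μ
  have hPA : P (A ⁻¹' 𝒜) = μ 𝒜 := (Measure.map_apply hA h𝒜).symm
  -- key bound for a single B
  have hbound : ∀ n (B : Set (I → Ω)), MeasurableSet[m n] B →
      |(P (A ⁻¹' 𝒜 ∩ A ⁻¹' B)).toReal - (P (A ⁻¹' 𝒜)).toReal * (P (A ⁻¹' B)).toReal| ≤ ε n := by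
    intro n B hB
    have hBamb : MeasurableSet B := hle n B hB
    have h1 : P (A ⁻¹' 𝒜 ∩ A ⁻¹' B) = μ (𝒜 ∩ B) := by
      rw [← Set.preimage_inter, hμ, Measure.map_apply hA (h𝒜.inter hBamb)]
    have h2 : P (A ⁻¹' B) = μ B := by rw [hμ, Measure.map_apply hA hBamb]
    rw [h1, h2, hPA]
    have h3 : (μ (𝒜 ∩ B)).toReal = ∫ x in B, (μ[f | m n]) x ∂μ := by
      rw [setIntegral_condExp (hle n) hf_int hB, hf, setIntegral_indicator h𝒜]
      rw [setIntegral_const]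
      rw [Set.inter_comm]
      simp [Measure.real]
    have h4 : (μ 𝒜).toReal * (μ B).toReal = ∫ _x in B, c ∂μ := by
      rw [setIntegral_const, smul_eq_mul, mul_comm, hcdef]; rfl
    rw [h3, h4, ← integral_sub integrable_condExp.integrableOn (integrableOn_const (C := c)
      (measure_lt_top μ B).ne)]
    have h5 : |∫ x in B, ((μ[f | m n]) x - c) ∂μ| ≤ ∫ x in B, |(μ[f | m n]) x - c| ∂μ := by
      simpa [Real.norm_eq_abs] using
        norm_integral_le_integral_norm (μ := μ.restrict B) (f := fun x => (μ[f | m n]) x - c)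
    refine le_trans h5 ?_
    refine setIntegral_le_integral ((integrable_condExp.sub (integrable_const c)).abs) ?_
    exact Filter.Eventually.of_forall fun x => abs_nonneg _
  -- squeeze
  refine squeeze_zero (fun n => ?_) (fun n => ?_) hεto0
  · exact Real.iSup_nonneg fun B => Real.iSup_nonneg fun _ => abs_nonneg _
  · exact Real.iSup_le (fun B => Real.iSup_le (fun hB => hbound n B hB) (hε_nonneg n))
      (hε_nonneg n)
end

section
/- Let Ω be a measurable space, let I be a countable set, let A = (A_i)_{i∈I} be an Ω^I-valued random variable with law P, and let (K_n)_{n≥0} be an increasing sequence of finite subsets of I with ⋃_{n≥0} K_n = I. If A is tail-trivial, then for every measurable set 𝒜 ⊆ Ω^I with P(A ∈ 𝒜) > 0, the quantity sup{ |P(A ∈ ℬ | A ∈ 𝒜) − P(A ∈ ℬ)| : ℬ a measurable set belonging to ℱ_{I∖K_n} } converges to 0 as n → ∞; equivalently, the total variation distance between the conditional distribution of (A_i)_{i∈I∖K_n} given the event {A ∈ 𝒜} and the unconditional distribution of (A_i)_{i∈I∖K_n} converges to zero as n → ∞. -/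
open MeasureTheory Filter

open scoped ENNReal

set_option synthInstance.maxHeartbeats 1000000
set_option maxHeartbeats 1000000

noncomputable section

/-- Cauchy criterion for "projection-like" sequences in an inner product space. -/
lemma aux_hilbert {H : Type*} [NormedAddCommGroup H] [InnerProductSpace ℝ H] [CompleteSpace H]
    (p : ℕ → H) (hortho : ∀ n m, n ≤ m → (inner ℝ (p n - p m) (p m) : ℝ) = 0) :
    ∃ y, Tendsto p atTop (nhds y) := by
  set c : ℕ → ℝ := fun n => ‖p n‖ ^ 2 with hc
  have hkey : ∀ n m, n ≤ m → ‖p n - p m‖ ^ 2 = c n - c m := by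
    intro n m hnm
    have h1 : ‖(p n - p m) + p m‖ ^ 2
        = ‖p n - p m‖ ^ 2 + 2 * (inner ℝ (p n - p m) (p m) : ℝ) + ‖p m‖ ^ 2 :=
      norm_add_sq_real _ _
    rw [sub_add_cancel, hortho n m hnm] at h1
    simp only [hc]
    linarith
  have hanti : Antitone c := by
    intro n m hnm
    have := hkey n m hnm
    nlinarith [sq_nonneg ‖p n - p m‖]
  have hbdd : BddBelow (Set.range c) := ⟨0, by rintro x ⟨n, rfl⟩; positivity⟩
  set L : ℝ := ⨅ n, c n with hL
  have htend : Tendsto c atTop (nhds L) := tendsto_atTop_ciInf hanti hbdd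
  have hLle : ∀ n, L ≤ c n := fun n => ciInf_le hbdd n
  have hcauchy : CauchySeq p := by
    apply cauchySeq_of_le_tendsto_0 (fun N => Real.sqrt (c N - L))
    · intro n m N hn hm
      wlog hnm : n ≤ m generalizing n m
      · rw [dist_comm]; exact this m n hm hn (le_of_not_ge hnm)
      rw [dist_eq_norm]
      have h2 : ‖p n - p m‖ ^ 2 = c n - c m := hkey n m hnm
      have : ‖p n - p m‖ = Real.sqrt (c n - c m) := by
        rw [← h2, Real.sqrt_sq (norm_nonneg _)]
      rw [this]
      exact Real.sqrt_le_sqrt (by have := hanti hn; have := hLle m; linarith)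
    · have : Tendsto (fun N => c N - L) atTop (nhds 0) := by
        simpa using htend.sub (tendsto_const_nhds (x := L))
      simpa using this.sqrt
  exact cauchySeq_tendsto_of_complete hcauchy

lemma key_tendsto {X : Type*} [mX : MeasurableSpace X] (μ ν : Measure X)
    [IsProbabilityMeasure μ] [IsProbabilityMeasure ν]
    (G : ℕ → MeasurableSpace X) (hG : ∀ n, G n ≤ mX) (hanti : Antitone G)
    (h0 : ∀ B : Set X, (∀ n, MeasurableSet[G n] B) → ν B = μ B) :
    Tendsto (fun n => ⨆ (B : Set X) (_ : MeasurableSet[G n] B),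
      |(ν B).toReal - (μ B).toReal|) atTop (nhds 0) := by
  classical
  set ρ : Measure X := μ + ν with hρdef
  have hμρ : μ ≪ ρ := by
    refine Measure.AbsolutelyContinuous.mk fun s hs h0s => ?_
    simp only [hρdef, Measure.add_apply, add_eq_zero] at h0s
    exact h0s.1
  have hνρ : ν ≪ ρ := by
    refine Measure.AbsolutelyContinuous.mk fun s hs h0s => ?_
    simp only [hρdef, Measure.add_apply, add_eq_zero] at h0s
    exact h0s.2
  have hμleρ : μ ≤ ρ := Measure.le_add_right le_rfl
  have hνleρ : ν ≤ ρ := Measure.le_add_left le_rfl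
  set f : X → ℝ := fun x => (ν.rnDeriv ρ x).toReal - (μ.rnDeriv ρ x).toReal with hfdef
  have hf_meas : Measurable f :=
    ((ν.measurable_rnDeriv ρ).ennreal_toReal).sub ((μ.measurable_rnDeriv ρ).ennreal_toReal)
  have hf_bdd : ∀ᵐ x ∂ρ, ‖f x‖ ≤ 2 := by
    filter_upwards [Measure.rnDeriv_le_one_of_le hμleρ, Measure.rnDeriv_le_one_of_le hνleρ]
      with x h1 h2
    simp only [hfdef, Real.norm_eq_abs]
    have e1 : (μ.rnDeriv ρ x).toReal ≤ 1 := by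
      simpa using ENNReal.toReal_mono (by simp) h1
    have e2 : (ν.rnDeriv ρ x).toReal ≤ 1 := by
      simpa using ENNReal.toReal_mono (by simp) h2
    have e3 : 0 ≤ (μ.rnDeriv ρ x).toReal := ENNReal.toReal_nonneg
    have e4 : 0 ≤ (ν.rnDeriv ρ x).toReal := ENNReal.toReal_nonneg
    rw [abs_le]; constructor <;> linarith
  have hf2 : MemLp f 2 ρ := MemLp.of_bound hf_meas.aestronglyMeasurable 2 hf_bdd
  have hf_int : Integrable f ρ :=
    (Measure.integrable_toReal_rnDeriv).sub (Measure.integrable_toReal_rnDeriv)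
  have hint : ∀ B : Set X, ∫ x in B, f x ∂ρ = (ν B).toReal - (μ B).toReal := by
    intro B
    rw [hfdef]
    rw [integral_sub (Measure.integrable_toReal_rnDeriv.integrableOn)
      (Measure.integrable_toReal_rnDeriv.integrableOn),
      Measure.setIntegral_toReal_rnDeriv hνρ B, Measure.setIntegral_toReal_rnDeriv hμρ B]
    rfl
  set F : Lp ℝ 2 ρ := hf2.toLp f with hFdef
  have hFae : (F : X → ℝ) =ᵐ[ρ] f := hf2.coeFn_toLp
  set V : ℕ → Submodule ℝ (Lp ℝ 2 ρ) := fun n => lpMeas ℝ ℝ (G n) 2 ρ with hVdef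
  set p : ℕ → Lp ℝ 2 ρ := fun n => (condExpL2 ℝ ℝ (hG n) F : Lp ℝ 2 ρ) with hpdef
  have hVanti : Antitone V := by
    intro n m hnm g hg
    rw [hVdef, mem_lpMeas_iff_aestronglyMeasurable] at hg ⊢
    exact hg.mono (hanti hnm)
  have hp_proj : ∀ n, haveI : Fact (G n ≤ mX) := ⟨hG n⟩
      p n = ((V n).orthogonalProjectionOnto F : Lp ℝ 2 ρ) := fun n => rfl
  have hpmem : ∀ n, p n ∈ V n := fun n => (condExpL2 ℝ ℝ (hG n) F).2
  have hsubmem : ∀ m, F - p m ∈ (V m)ᗮ := by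
    intro m
    haveI : Fact (G m ≤ mX) := ⟨hG m⟩
    rw [hp_proj m]
    exact Submodule.sub_starProjection_mem_orthogonal (K := V m) F
  have hortho : ∀ n m, n ≤ m → (inner ℝ (p n - p m) (p m) : ℝ) = 0 := by
    intro n m hnm
    haveI : Fact (G m ≤ mX) := ⟨hG m⟩
    haveI : Fact (G n ≤ mX) := ⟨hG n⟩
    have e : (V m).orthogonalProjectionOnto (p n) = (V m).orthogonalProjectionOnto F := by
      rw [hp_proj n]
      exact Submodule.orthogonalProjectionOnto_starProjection_of_le (hVanti hnm) F
    have hmem : p n - p m ∈ (V m)ᗮ := by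
      have : p n - ((V m).orthogonalProjectionOnto (p n) : Lp ℝ 2 ρ) ∈ (V m)ᗮ :=
        Submodule.sub_starProjection_mem_orthogonal (K := V m) (p n)
      rwa [e, ← hp_proj m] at this
    exact Submodule.inner_left_of_mem_orthogonal (hpmem m) hmem
  obtain ⟨y, hy⟩ := aux_hilbert p hortho
  -- y belongs to every V m
  have hVclosed : ∀ m, IsClosed (V m : Set (Lp ℝ 2 ρ)) := by
    intro m
    haveI : Fact (G m ≤ mX) := ⟨hG m⟩
    have : V m = lpMeas ℝ ℝ (G m) 2 ρ := by rw [hVdef]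
    rw [this]
    exact (completeSpace_coe_iff_isComplete.mp
      (inferInstance : CompleteSpace (lpMeas ℝ ℝ (G m) 2 ρ))).isClosed
  have hymem : ∀ m, y ∈ V m := by
    intro m
    refine (hVclosed m).mem_of_tendsto hy ?_
    filter_upwards [eventually_ge_atTop m] with n hn
    exact hVanti hn (hpmem n)
  have hymeas : ∀ m, AEStronglyMeasurable[G m] y ρ := by
    intro m
    have := hymem m
    rw [hVdef] at this
    exact mem_lpMeas_iff_aestronglyMeasurable.mp this
  set y' : ℕ → X → ℝ := fun m => (hymeas m).mk y with hy'def
  have hsm : ∀ m, StronglyMeasurable[G m] (y' m) := fun m => (hymeas m).stronglyMeasurable_mk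
  have haey : ∀ m, (y : X → ℝ) =ᵐ[ρ] y' m := fun m => (hymeas m).ae_eq_mk
  set h : X → ℝ := fun x => Filter.liminf (fun m => y' m x) atTop with hhdef
  have hh_meas : ∀ k, Measurable[G k] h := by
    intro k
    have hrw : h = fun x => Filter.liminf (fun m => y' (m + k) x) atTop := by
      funext x
      exact (Filter.liminf_nat_add (fun m => y' m x) k).symm
    rw [hrw]
    exact Measurable.liminf fun m =>
      ((hsm (m + k)).measurable).mono (hanti (Nat.le_add_left k m)) le_rfl
  have hae_h : h =ᵐ[ρ] (y : X → ℝ) := by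
    have hall : ∀ᵐ x ∂ρ, ∀ m, (y : X → ℝ) x = y' m x := ae_all_iff.mpr haey
    filter_upwards [hall] with x hx
    have : (fun m => y' m x) = fun _ => (y : X → ℝ) x := by
      funext m; exact (hx m).symm
    rw [hhdef]
    simp only [this]
    exact Filter.liminf_const _
  -- the tail σ-algebra
  have hmT : (⨅ n, G n) ≤ mX := (iInf_le _ 0).trans (hG 0)
  have hh_measT : Measurable[⨅ n, G n] h := by
    intro s hs
    exact MeasurableSpace.measurableSet_iInf.mpr fun n => hh_meas n hs
  haveI : SigmaFinite (ρ.trim hmT) := by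
    haveI : IsFiniteMeasure (ρ.trim hmT) := isFiniteMeasure_trim hmT
    infer_instance
  -- conditional expectation of f w.r.t. the tail σ-algebra is zero
  have hcond0 : ρ[f | (⨅ n, G n)] =ᵐ[ρ] 0 := by
    refine ae_eq_of_forall_setIntegral_eq_of_sigmaFinite' hmT
      (fun s _ _ => integrable_condExp.integrableOn)
      (fun s _ _ => (integrable_zero _ _ _).integrableOn) (fun s hs hρs => ?_)
      (StronglyMeasurable.aestronglyMeasurable stronglyMeasurable_condExp)
      ((@stronglyMeasurable_zero X ℝ (⨅ n, G n) _ _).aestronglyMeasurable)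
    have hs' : ∀ n, MeasurableSet[G n] s := fun n => (iInf_le G n) s hs
    rw [setIntegral_condExp hmT hf_int hs, hint s]
    simp [h0 s hs']
  -- the limit y is zero
  have hy0 : y = 0 := by
    have hpF : ∀ n, (inner ℝ (p n) F : ℝ) = ‖p n‖ ^ 2 := by
      intro n
      have hdec : F = p n + (F - p n) := by abel
      have hz : (inner ℝ (p n) (F - p n) : ℝ) = 0 := by
        rw [real_inner_comm]
        exact Submodule.inner_left_of_mem_orthogonal (hpmem n) (hsubmem n)
      calc (inner ℝ (p n) F : ℝ) = inner ℝ (p n) (p n + (F - p n)) := by rw [← hdec]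
        _ = (inner ℝ (p n) (p n) : ℝ) + inner ℝ (p n) (F - p n) := inner_add_right _ _ _
        _ = ‖p n‖ ^ 2 := by rw [hz, real_inner_self_eq_norm_sq, add_zero]
    have t1 : Tendsto (fun n => (inner ℝ (p n) F : ℝ)) atTop (nhds (inner ℝ y F)) :=
      hy.inner tendsto_const_nhds
    have t2 : Tendsto (fun n => (inner ℝ (p n) F : ℝ)) atTop (nhds (‖y‖ ^ 2)) := by
      simp only [hpF]
      exact (hy.norm).pow 2
    have hyF : (inner ℝ y F : ℝ) = ‖y‖ ^ 2 := tendsto_nhds_unique t1 t2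
    have hiy : (inner ℝ y F : ℝ) = ∫ x, (y : X → ℝ) x * (F : X → ℝ) x ∂ρ := by
      rw [MeasureTheory.L2.inner_def]
      simp [RCLike.inner_apply, starRingEnd_apply, mul_comm]
    have hInt1 : Integrable (fun x => (y : X → ℝ) x * (F : X → ℝ) x) ρ := by
      have := MeasureTheory.L2.integrable_inner (𝕜 := ℝ) y F
      simpa [RCLike.inner_apply, starRingEnd_apply, mul_comm] using this
    have haemul : (fun x => (y : X → ℝ) x * (F : X → ℝ) x) =ᵐ[ρ] (h * f) := by
      filter_upwards [hae_h, hFae] with x hx1 hx2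
      simp [Pi.mul_apply, ← hx1, hx2]
    have hIntHf : Integrable (h * f) ρ := hInt1.congr haemul
    have hpull : ρ[h * f | (⨅ n, G n)] =ᵐ[ρ] h * ρ[f | (⨅ n, G n)] :=
      condExp_mul_of_stronglyMeasurable_left hh_measT.stronglyMeasurable hIntHf hf_int
    have hzero : ∫ x, (y : X → ℝ) x * (F : X → ℝ) x ∂ρ = 0 := by
      rw [integral_congr_ae haemul, ← integral_condExp hmT (f := h * f),
        integral_congr_ae hpull]
      have : (h * ρ[f | (⨅ n, G n)] : X → ℝ) =ᵐ[ρ] 0 := by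
        filter_upwards [hcond0] with x hx
        simp [Pi.mul_apply, hx]
      rw [integral_congr_ae this]
      simp
    have : ‖y‖ ^ 2 = 0 := by rw [← hyF, hiy, hzero]
    have : ‖y‖ = 0 := by
      have := pow_eq_zero_iff (n := 2) (by norm_num) |>.mp this
      exact this
    exact norm_eq_zero.mp this
  have hnorm0 : Tendsto (fun n => ‖p n‖) atTop (nhds 0) := by
    have := hy.norm
    rwa [hy0, norm_zero] at this
  -- bound the supremum by the norm of the conditional expectation
  have hρuniv : ρ Set.univ = 2 := by
    simp only [hρdef, Measure.add_apply, measure_univ]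
    norm_num
  have keybound : ∀ n (B : Set X), MeasurableSet[G n] B →
      |(ν B).toReal - (μ B).toReal| ≤ 2 * ‖p n‖ := by
    intro n B hB
    have hBm : MeasurableSet B := hG n B hB
    have hBne : ρ B ≠ ∞ := measure_ne_top ρ B
    have e0 : ∫ x in B, f x ∂ρ = ∫ x in B, (F : X → ℝ) x ∂ρ :=
      setIntegral_congr_ae hBm (hFae.mono fun x hx _ => hx.symm)
    have e1 : ∫ x in B, (p n : X → ℝ) x ∂ρ = ∫ x in B, (F : X → ℝ) x ∂ρ :=
      integral_condExpL2_eq (hG n) F hB hBne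
    set g : Lp ℝ 2 ρ := indicatorConstLp 2 hBm hBne (1 : ℝ) with hgdef
    have e2 : (inner ℝ g (p n) : ℝ) = ∫ x in B, (p n : X → ℝ) x ∂ρ := by
      rw [hgdef, MeasureTheory.L2.inner_indicatorConstLp_eq_setIntegral_inner]
      simp [RCLike.inner_apply, starRingEnd_apply]
    have e3 : |(inner ℝ g (p n) : ℝ)| ≤ ‖g‖ * ‖p n‖ := abs_real_inner_le_norm _ _
    have e4 : ‖g‖ ≤ 2 := by
      rw [hgdef, norm_indicatorConstLp (by norm_num) (by norm_num)]
      have h1 : (ρ B).toReal ≤ 2 := by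
        have : ρ B ≤ 2 := hρuniv ▸ measure_mono (Set.subset_univ B)
        simpa using ENNReal.toReal_mono (by norm_num) this
      have h2 : (ρ B).toReal ^ ((1 : ℝ) / (2 : ℝ≥0∞).toReal) ≤ 2 := by
        simp only [ENNReal.toReal_ofNat]
        calc (ρ B).toReal ^ ((1:ℝ)/2) ≤ (4 : ℝ) ^ ((1:ℝ)/2) :=
              Real.rpow_le_rpow ENNReal.toReal_nonneg (by linarith) (by norm_num)
          _ = 2 := by
              rw [show (4:ℝ) = 2 ^ (2:ℕ) by norm_num, ← Real.rpow_natCast, ← Real.rpow_mul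
                (by norm_num)]
              norm_num
      simpa [Measure.real] using h2
    calc |(ν B).toReal - (μ B).toReal| = |∫ x in B, (p n : X → ℝ) x ∂ρ| := by
          rw [← hint B, e0, ← e1]
      _ = |(inner ℝ g (p n) : ℝ)| := by rw [e2]
      _ ≤ ‖g‖ * ‖p n‖ := e3
      _ ≤ 2 * ‖p n‖ := by
          have := norm_nonneg (p n)
          nlinarith [norm_nonneg g]
  -- conclude by squeezing
  refine squeeze_zero (g := fun n => 2 * ‖p n‖) (fun n => ?_) (fun n => ?_) ?_
  · exact Real.iSup_nonneg fun B => Real.iSup_nonneg fun _ => abs_nonneg _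
  · exact Real.iSup_le (fun B => Real.iSup_le (fun hB => keybound n B hB)
      (by positivity)) (by positivity)
  · simpa using hnorm0.const_mul 2


theorem stmt2 {Ω : Type*} [MeasurableSpace Ω] {I : Type*} [Countable I]
    {α : Type*} [MeasurableSpace α] (P : Measure α) [IsProbabilityMeasure P]
    (A : α → I → Ω) (hA : Measurable A)
    (K : ℕ → Finset I) (hmono : Monotone K) (hcov : (⋃ n, (K n : Set I)) = Set.univ)
    (htriv : ∀ S : Set (I → Ω), MeasurableSet[tailAlg Ω I] S →
      P (A ⁻¹' S) = 0 ∨ P (A ⁻¹' S) = 1)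
    (𝒜 : Set (I → Ω)) (h𝒜 : MeasurableSet 𝒜) (hpos : 0 < P (A ⁻¹' 𝒜)) :
    Tendsto
      (fun n => ⨆ (B : Set (I → Ω)) (_ : MeasurableSet[cylAlg Ω ((K n : Set I)ᶜ)] B),
        |(P (A ⁻¹' 𝒜 ∩ A ⁻¹' B)).toReal / (P (A ⁻¹' 𝒜)).toReal - (P (A ⁻¹' B)).toReal|)
      atTop (nhds 0) := by
  classical
  set μ : Measure (I → Ω) := P.map A with hμdef
  haveI : IsProbabilityMeasure μ := Measure.isProbabilityMeasure_map hA.aemeasurable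
  have hmap : ∀ S : Set (I → Ω), MeasurableSet S → μ S = P (A ⁻¹' S) := fun S hS =>
    Measure.map_apply hA hS
  have hμ𝒜 : μ 𝒜 = P (A ⁻¹' 𝒜) := hmap 𝒜 h𝒜
  have h𝒜ne : μ 𝒜 ≠ 0 := by rw [hμ𝒜]; exact hpos.ne'
  have h𝒜top : μ 𝒜 ≠ ∞ := (measure_lt_top μ 𝒜).ne
  set ν : Measure (I → Ω) := (μ 𝒜)⁻¹ • μ.restrict 𝒜 with hνdef
  haveI : IsProbabilityMeasure ν := by
    constructor
    rw [hνdef, Measure.smul_apply, Measure.restrict_apply_univ, smul_eq_mul,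
      ENNReal.inv_mul_cancel h𝒜ne h𝒜top]
  set G : ℕ → MeasurableSpace (I → Ω) := fun n => cylAlg Ω ((K n : Set I)ᶜ) with hGdef
  have hcyl_le : ∀ J : Set I, cylAlg Ω J ≤ MeasurableSpace.pi := by
    intro J
    refine iSup_le fun i => iSup_le fun _ => ?_
    exact (measurable_pi_apply i).comap_le
  have hcyl_mono : ∀ J J' : Set I, J ⊆ J' → cylAlg Ω J ≤ cylAlg Ω J' := by
    intro J J' hJJ'
    exact biSup_mono hJJ'
  have hG : ∀ n, G n ≤ MeasurableSpace.pi := fun n => hcyl_le _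
  have hanti : Antitone G := by
    intro n m hnm
    exact hcyl_mono _ _ (Set.compl_subset_compl.mpr (by exact_mod_cast hmono hnm))
  have htail : ∀ B : Set (I → Ω), (∀ n, MeasurableSet[G n] B) →
      MeasurableSet[tailAlg Ω I] B := by
    intro B hB
    rw [tailAlg]
    refine MeasurableSpace.measurableSet_iInf.mpr fun J => ?_
    refine MeasurableSpace.measurableSet_iInf.mpr fun hJ => ?_
    obtain ⟨n, hn⟩ : ∃ n, ∀ j ∈ Jᶜ, j ∈ K n := by
      have hev : ∀ j ∈ Jᶜ, ∀ᶠ n in atTop, j ∈ K n := by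
        intro j _
        have : j ∈ ⋃ n, (K n : Set I) := hcov ▸ Set.mem_univ j
        obtain ⟨n₀, hn₀⟩ := Set.mem_iUnion.mp this
        exact eventually_atTop.mpr ⟨n₀, fun m hm => hmono hm hn₀⟩
      exact ((hJ.eventually_all).mpr hev).exists
    have hsub : ((K n : Set I))ᶜ ⊆ J := by
      intro j hj
      by_contra hjJ
      exact hj (hn j hjJ)
    exact hcyl_mono _ _ hsub B (hB n)
  have h0 : ∀ B : Set (I → Ω), (∀ n, MeasurableSet[G n] B) → ν B = μ B := by
    intro B hB
    have hBm : MeasurableSet B := hG 0 B (hB 0)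
    have hνB : ν B = (μ 𝒜)⁻¹ * μ (B ∩ 𝒜) := by
      rw [hνdef, Measure.smul_apply, Measure.restrict_apply hBm, smul_eq_mul]
    rcases htriv B (htail B hB) with h | h
    · have hμB : μ B = 0 := by rw [hmap B hBm]; exact h
      have : μ (B ∩ 𝒜) = 0 :=
        measure_mono_null Set.inter_subset_left hμB
      rw [hνB, this, hμB, mul_zero]
    · have hμB : μ B = 1 := by rw [hmap B hBm]; exact h
      have hcompl : μ Bᶜ = 0 := by
        rw [measure_compl hBm (measure_lt_top μ B).ne, hμB, measure_univ, tsub_self]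
      have hBA : μ (B ∩ 𝒜) = μ 𝒜 := by
        rw [Set.inter_comm]
        exact measure_inter_conull hcompl
      rw [hνB, hBA, ENNReal.inv_mul_cancel h𝒜ne h𝒜top, hμB]
  have hrw : (fun n => ⨆ (B : Set (I → Ω)) (_ : MeasurableSet[cylAlg Ω ((K n : Set I)ᶜ)] B),
        |(P (A ⁻¹' 𝒜 ∩ A ⁻¹' B)).toReal / (P (A ⁻¹' 𝒜)).toReal - (P (A ⁻¹' B)).toReal|)
      = fun n => ⨆ (B : Set (I → Ω)) (_ : MeasurableSet[G n] B),
        |(ν B).toReal - (μ B).toReal| := by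
    funext n
    refine iSup_congr fun B => ?_
    by_cases hB : MeasurableSet[G n] B
    · have hBm : MeasurableSet B := hG n B hB
      have hval : (P (A ⁻¹' 𝒜 ∩ A ⁻¹' B)).toReal / (P (A ⁻¹' 𝒜)).toReal
          - (P (A ⁻¹' B)).toReal = (ν B).toReal - (μ B).toReal := by
        have h1 : ν B = (μ 𝒜)⁻¹ * μ (B ∩ 𝒜) := by
          rw [hνdef, Measure.smul_apply, Measure.restrict_apply hBm, smul_eq_mul]
        have h2 : μ (B ∩ 𝒜) = P (A ⁻¹' 𝒜 ∩ A ⁻¹' B) := by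
          rw [hmap (B ∩ 𝒜) (hBm.inter h𝒜), Set.preimage_inter, Set.inter_comm]
        have h3 : μ B = P (A ⁻¹' B) := hmap B hBm
        rw [h1, h2, h3, ENNReal.toReal_mul, ENNReal.toReal_inv, hμ𝒜]
        ring
      rw [hval]
    · haveI : IsEmpty (MeasurableSet[G n] B) := ⟨hB⟩
      rw [Real.iSup_of_isEmpty, Real.iSup_of_isEmpty]
  rw [hrw]
  exact key_tendsto μ ν G hG hanti h0


end
end

section
/- Let (X_i)_{i≥1} and X be random variables defined on a common probability space (Ω, P) taking values in a locally compact, separable metric space 𝕏 (equipped with its Borel σ-algebra), and let (B_i)_{i≥1} and B be measurable subsets of Ω with P(B) > 0. Suppose that: (1) X_i has the same distribution as X for every i ≥ 1; (2) X_i converges to X in probability as i → ∞; and (3) P(B_i Δ B) → 0 as i → ∞. Then for every Borel set A ⊆ 𝕏, the conditional probabilities satisfy P(X ∈ A | B) = lim_{i→∞} P(X_i ∈ A | B_i). -/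
open MeasureTheory Filter
open scoped ENNReal

/-- If the measure of the symmetric difference tends to zero, measures converge. -/
lemma aux_tendsto_of_symmDiff {α : Type*} [MeasurableSpace α] (P : Measure α)
    [IsFiniteMeasure P] {C : ℕ → Set α} {C₀ : Set α}
    (h : Tendsto (fun i => P (symmDiff (C i) C₀)) atTop (nhds 0)) :
    Tendsto (fun i => P (C i)) atTop (nhds (P C₀)) := by
  have hub : ∀ i, P (C i) ≤ P C₀ + P (symmDiff (C i) C₀) := by
    intro i
    refine le_trans (measure_mono ?_) (measure_union_le _ _)
    intro x hx
    by_cases hx0 : x ∈ C₀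
    · exact Or.inl hx0
    · exact Or.inr (Set.mem_symmDiff.2 (Or.inl ⟨hx, hx0⟩))
  have hlb : ∀ i, P C₀ - P (symmDiff (C i) C₀) ≤ P (C i) := by
    intro i
    rw [tsub_le_iff_right]
    refine le_trans (measure_mono ?_) (measure_union_le _ _)
    intro x hx
    by_cases hxi : x ∈ C i
    · exact Or.inl hxi
    · exact Or.inr (Set.mem_symmDiff.2 (Or.inr ⟨hx, hxi⟩))
  have h1 : Tendsto (fun i => P C₀ - P (symmDiff (C i) C₀)) atTop (nhds (P C₀)) := by
    have := ENNReal.Tendsto.sub (tendsto_const_nhds (x := P C₀)) h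
      (Or.inl (measure_ne_top P C₀))
    simpa using this
  have h2 : Tendsto (fun i => P C₀ + P (symmDiff (C i) C₀)) atTop (nhds (P C₀)) := by
    have := Tendsto.add (tendsto_const_nhds (x := P C₀)) h
    simpa using this
  exact tendsto_of_tendsto_of_tendsto_of_le_of_le h1 h2 hlb hub

theorem stmt3 {α : Type*} [MeasurableSpace α] (P : Measure α) [IsProbabilityMeasure P]
    {𝕏 : Type*} [MetricSpace 𝕏] [LocallyCompactSpace 𝕏]
    [TopologicalSpace.SeparableSpace 𝕏] [MeasurableSpace 𝕏] [BorelSpace 𝕏]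
    (X : ℕ → α → 𝕏) (X₀ : α → 𝕏)
    (hX : ∀ i, Measurable (X i)) (hX₀ : Measurable X₀)
    (B : ℕ → Set α) (B₀ : Set α)
    (hB : ∀ i, MeasurableSet (B i)) (hB₀ : MeasurableSet B₀) (hpos : 0 < P B₀)
    -- (1) each `X i` has the same distribution as `X₀`
    (hdist : ∀ i, P.map (X i) = P.map X₀)
    -- (2) `X i → X₀` in probability
    (hprob : ∀ ε : ℝ, 0 < ε →
      Tendsto (fun i => P {a | ε < dist (X i a) (X₀ a)}) atTop (nhds 0))
    -- (3) `P (symmDiff (B i) B₀) → 0`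
    (hsymm : Tendsto (fun i => P (symmDiff (B i) B₀)) atTop (nhds 0))
    (A : Set 𝕏) (hA : MeasurableSet A) :
    Tendsto (fun i => P (X i ⁻¹' A ∩ B i) / P (B i)) atTop
      (nhds (P (X₀ ⁻¹' A ∩ B₀) / P B₀)) := by
  -- the common law
  set ν : Measure 𝕏 := P.map X₀ with hν
  have hνprob : IsProbabilityMeasure ν := Measure.isProbabilityMeasure_map hX₀.aemeasurable
  have hmapi : ∀ i (S : Set 𝕏), MeasurableSet S → P (X i ⁻¹' S) = ν S := by
    intro i S hS
    rw [← hdist i]; exact (Measure.map_apply (hX i) hS).symm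
  have hmap0 : ∀ (S : Set 𝕏), MeasurableSet S → P (X₀ ⁻¹' S) = ν S := by
    intro S hS
    exact (Measure.map_apply hX₀ hS).symm
  -- symmetry of the two one-sided differences, by equal distributions
  have hsym : ∀ i (S : Set 𝕏), MeasurableSet S →
      P (X i ⁻¹' S \ X₀ ⁻¹' S) = P (X₀ ⁻¹' S \ X i ⁻¹' S) := by
    intro i S hS
    have h1 : P (X i ⁻¹' S ∩ X₀ ⁻¹' S) + P (X i ⁻¹' S \ X₀ ⁻¹' S) = P (X i ⁻¹' S) :=
      measure_inter_add_diff _ (hX₀ hS)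
    have h2 : P (X₀ ⁻¹' S ∩ X i ⁻¹' S) + P (X₀ ⁻¹' S \ X i ⁻¹' S) = P (X₀ ⁻¹' S) :=
      measure_inter_add_diff _ ((hX i) hS)
    rw [Set.inter_comm] at h2
    have heq : P (X i ⁻¹' S) = P (X₀ ⁻¹' S) := by
      rw [hmapi i S hS, hmap0 S hS]
    refine (ENNReal.add_right_inj (measure_ne_top P (X i ⁻¹' S ∩ X₀ ⁻¹' S))).1 ?_
    rw [h1, h2, heq]
  -- Key step: symmetric difference of the preimages tends to zero
  have hkey : Tendsto (fun i => P (symmDiff (X i ⁻¹' A) (X₀ ⁻¹' A))) atTop (nhds 0) := by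
    rw [ENNReal.tendsto_nhds_zero]
    intro ε hε
    rcases eq_or_ne ε ⊤ with hεtop | hεtop
    · filter_upwards with i; simp [hεtop]
    have hε6 : (ε / 6 : ℝ≥0∞) ≠ 0 := by
      simp [ENNReal.div_eq_zero_iff, hε.ne']
    have hε6' : (0 : ℝ≥0∞) < ε / 6 := pos_iff_ne_zero.2 hε6
    -- choose a closed subset `F ⊆ A` with `ν (A \ F) < ε/6`
    obtain ⟨F, hFA, hFc, hFlt⟩ := hA.exists_isClosed_diff_lt (measure_ne_top ν A) hε6
    have hAF : ν (symmDiff A F) ≤ ε / 6 := by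
      rw [symmDiff_of_ge hFA]
      exact hFlt.le
    rcases F.eq_empty_or_nonempty with hFe | hFne
    · -- degenerate case: `ν A` is itself small
      have hAsmall : ν A ≤ ε / 6 := by
        have : ν (A \ F) = ν A := by rw [hFe]; simp
        rw [← this]; exact hFlt.le
      filter_upwards with i
      calc P (symmDiff (X i ⁻¹' A) (X₀ ⁻¹' A))
          ≤ P (X i ⁻¹' A) + P (X₀ ⁻¹' A) := by
            refine le_trans (measure_mono ?_) (measure_union_le _ _)
            exact symmDiff_le_sup
        _ ≤ ε / 6 + ε / 6 := by
            rw [hmapi i A hA, hmap0 A hA]; exact add_le_add hAsmall hAsmall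
        _ ≤ ε / 2 + ε / 2 := by gcongr <;> norm_num
        _ = ε := ENNReal.add_halves ε
    -- nondegenerate case: shrinking neighborhoods of `F`
    · set E : ℕ → Set 𝕏 := fun n => {x | Metric.infDist x F ≤ 1 / (n + 1)} \ F with hE
      have hEm : ∀ n, MeasurableSet (E n) := by
        intro n
        exact ((isClosed_le (Metric.continuous_infDist_pt F) continuous_const).measurableSet).diff
          hFc.measurableSet
      have hEanti : Antitone E := by
        intro n m hnm x hx
        simp only [hE, Set.mem_diff, Set.mem_setOf_eq] at hx ⊢
        refine ⟨le_trans hx.1 ?_, hx.2⟩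
        apply one_div_le_one_div_of_le
        · positivity
        · exact_mod_cast Nat.succ_le_succ hnm
      have hEinter : ⋂ n, E n = ∅ := by
        ext x
        simp only [Set.mem_iInter, Set.mem_empty_iff_false, iff_false]
        intro hx
        have hdist0 : Metric.infDist x F ≤ 0 := by
          refine le_of_forall_pos_le_add fun δ hδ => ?_
          obtain ⟨n, hn⟩ := exists_nat_one_div_lt hδ
          exact le_trans ((hx n).1) (by linarith)
        have : x ∈ F := (hFc.mem_iff_infDist_zero hFne).2
          (le_antisymm hdist0 Metric.infDist_nonneg)
        exact (hx 0).2 this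
      have hEtend : Tendsto (fun n => ν (E n)) atTop (nhds 0) := by
        have := tendsto_measure_iInter_atTop (μ := ν)
          (fun n => (hEm n).nullMeasurableSet) hEanti ⟨0, measure_ne_top ν _⟩
        rw [hEinter] at this
        simpa [Function.comp_def] using this
      obtain ⟨n₀, hn₀⟩ := (ENNReal.tendsto_nhds_zero.1 hEtend (ε / 6) hε6').exists
      set δ : ℝ := 1 / (n₀ + 1) with hδdef
      have hδpos : (0 : ℝ) < δ := by positivity
      have hdistev : ∀ᶠ i in atTop, P {a | δ < dist (X i a) (X₀ a)} ≤ ε / 6 :=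
        ENNReal.tendsto_nhds_zero.1 (hprob δ hδpos) (ε / 6) hε6'
      filter_upwards [hdistev] with i hi
      -- one-sided difference for the closed set `F`
      have honeside : P (X i ⁻¹' F \ X₀ ⁻¹' F) ≤ ε / 6 + ε / 6 := by
        have hsub : X i ⁻¹' F \ X₀ ⁻¹' F ⊆
            {a | δ < dist (X i a) (X₀ a)} ∪ X₀ ⁻¹' E n₀ := by
          rintro a ⟨hai, ha0⟩
          by_cases hd : Metric.infDist (X₀ a) F ≤ δ
          · exact Or.inr ⟨hd, ha0⟩
          · refine Or.inl ?_
            push_neg at hd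
            have : Metric.infDist (X₀ a) F ≤ dist (X₀ a) (X i a) :=
              Metric.infDist_le_dist_of_mem hai
            simp only [Set.mem_setOf_eq]
            rw [dist_comm]
            linarith
        calc P (X i ⁻¹' F \ X₀ ⁻¹' F)
            ≤ P ({a | δ < dist (X i a) (X₀ a)} ∪ X₀ ⁻¹' E n₀) := measure_mono hsub
          _ ≤ P {a | δ < dist (X i a) (X₀ a)} + P (X₀ ⁻¹' E n₀) := measure_union_le _ _
          _ ≤ ε / 6 + ε / 6 := by
              rw [hmap0 (E n₀) (hEm n₀)]
              exact add_le_add hi hn₀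
      have hFdiff : P (symmDiff (X i ⁻¹' F) (X₀ ⁻¹' F)) ≤ ε / 6 + ε / 6 + (ε / 6 + ε / 6) := by
        rw [measure_symmDiff_eq ((hX i) hFc.measurableSet).nullMeasurableSet
          (hX₀ hFc.measurableSet).nullMeasurableSet, ← hsym i F hFc.measurableSet]
        exact add_le_add honeside honeside
      -- assemble via the symmetric-difference triangle inequality
      calc P (symmDiff (X i ⁻¹' A) (X₀ ⁻¹' A))
          ≤ P (symmDiff (X i ⁻¹' A) (X i ⁻¹' F)) + P (symmDiff (X i ⁻¹' F) (X₀ ⁻¹' F))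
            + P (symmDiff (X₀ ⁻¹' F) (X₀ ⁻¹' A)) := by
            refine le_trans (measure_symmDiff_le _ (X i ⁻¹' F) _) ?_
            rw [add_assoc]
            exact add_le_add le_rfl (measure_symmDiff_le _ (X₀ ⁻¹' F) _)
        _ ≤ ε / 6 + (ε / 6 + ε / 6 + (ε / 6 + ε / 6)) + ε / 6 := by
            refine add_le_add (add_le_add ?_ hFdiff) ?_
            · rw [← Set.preimage_symmDiff, hmapi i _ (hA.symmDiff hFc.measurableSet)]
              exact hAF
            · rw [← Set.preimage_symmDiff, symmDiff_comm,
                hmap0 _ (hA.symmDiff hFc.measurableSet)]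
              exact hAF
        _ = 6 * (ε / 6) := by ring
        _ = ε := ENNReal.mul_div_cancel' (by norm_num) (by norm_num)
  -- convergence of denominators
  have hden : Tendsto (fun i => P (B i)) atTop (nhds (P B₀)) :=
    aux_tendsto_of_symmDiff P hsymm
  -- convergence of numerators
  have hnumsymm : Tendsto
      (fun i => P (symmDiff (X i ⁻¹' A ∩ B i) (X₀ ⁻¹' A ∩ B₀))) atTop (nhds 0) := by
    have hle : ∀ i, P (symmDiff (X i ⁻¹' A ∩ B i) (X₀ ⁻¹' A ∩ B₀)) ≤
        P (symmDiff (X i ⁻¹' A) (X₀ ⁻¹' A)) + P (symmDiff (B i) B₀) := by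
      intro i
      refine le_trans (measure_mono ?_) (measure_union_le _ _)
      intro x hx
      rcases Set.mem_symmDiff.1 hx with ⟨⟨h1, h2⟩, h3⟩ | ⟨⟨h1, h2⟩, h3⟩ <;>
        simp only [Set.mem_inter_iff, not_and] at h3 <;>
        [skip; skip] <;>
      · by_cases hx1 : x ∈ X i ⁻¹' A <;> by_cases hx2 : x ∈ X₀ ⁻¹' A <;>
        by_cases hx3 : x ∈ B i <;> by_cases hx4 : x ∈ B₀ <;>
        simp only [Set.mem_union, Set.mem_symmDiff] <;> tauto
    have hsum : Tendsto
        (fun i => P (symmDiff (X i ⁻¹' A) (X₀ ⁻¹' A)) + P (symmDiff (B i) B₀))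
        atTop (nhds 0) := by
      have := Tendsto.add hkey hsymm
      simpa using this
    exact tendsto_of_tendsto_of_tendsto_of_le_of_le tendsto_const_nhds hsum
      (fun i => zero_le) hle
  have hnum : Tendsto (fun i => P (X i ⁻¹' A ∩ B i)) atTop
      (nhds (P (X₀ ⁻¹' A ∩ B₀))) := aux_tendsto_of_symmDiff P hnumsymm
  exact ENNReal.Tendsto.div hnum (Or.inr hpos.ne') hden (Or.inl (measure_ne_top P B₀))
end

section
/- Let Ω be a measurable space, let I be a countable set, and let B¹, …, B^k be independent Ω^I-valued random variables, each of which is tail-trivial. Then the (Ω^k)^I-valued random variable ((B_i^1, …, B_i^k))_{i∈I} is tail-trivial. -/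
open MeasureTheory Filter
open scoped ENNReal

section Aux

variable {I : Type*}

lemma measurable_eval_cylAlg {Ω : Type*} [m : MeasurableSpace Ω] {J : Set I} {i : I}
    (hi : i ∈ J) : Measurable[cylAlg Ω J] (fun f : I → Ω => f i) := by
  rw [measurable_iff_comap_le, cylAlg]
  exact le_iSup₂ (f := fun i (_ : i ∈ J) => MeasurableSpace.comap (fun f : I → Ω => f i) m) i hi

lemma measurable_into_cylAlg {β Ω₂ : Type*} {mβ : MeasurableSpace β} [m₂ : MeasurableSpace Ω₂]
    {g : β → I → Ω₂} {J : Set I} (h : ∀ i ∈ J, Measurable[mβ] (fun b => g b i)) :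
    Measurable[mβ, cylAlg Ω₂ J] g := by
  rw [measurable_iff_comap_le, cylAlg]
  simp only [MeasurableSpace.comap_iSup, MeasurableSpace.comap_comp]
  exact iSup₂_le fun i hi => measurable_iff_comap_le.mp (h i hi)

lemma cylAlg_le_pi {Ω : Type*} [MeasurableSpace Ω] (J : Set I) :
    cylAlg Ω J ≤ MeasurableSpace.pi := by
  refine iSup₂_le fun i _ => ?_
  exact measurable_iff_comap_le.mp (measurable_pi_apply i)

lemma tailAlg_le_pi {Ω : Type*} [MeasurableSpace Ω] :
    tailAlg Ω I ≤ (MeasurableSpace.pi : MeasurableSpace (I → Ω)) := by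
  refine le_trans ?_ (cylAlg_le_pi (Ω := Ω) (Set.univ : Set I))
  exact iInf₂_le Set.univ (by simp)

lemma measurableSet_tailAlg_iff {Ω : Type*} [MeasurableSpace Ω] {S : Set (I → Ω)} :
    MeasurableSet[tailAlg Ω I] S ↔
      ∀ J : Set I, Jᶜ.Finite → MeasurableSet[cylAlg Ω J] S := by
  rw [tailAlg]
  simp only [MeasurableSpace.measurableSet_iInf]

/-- The key two-factor lemma: the pairing of two independent tail-trivial random
variables is tail-trivial. -/
theorem pair_tail_trivial {Ω₁ Ω₂ : Type*} [MeasurableSpace Ω₁] [MeasurableSpace Ω₂]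
    {α : Type*} [MeasurableSpace α] (P : Measure α) [IsProbabilityMeasure P]
    {X : α → I → Ω₁} {Y : α → I → Ω₂} (hX : Measurable X) (hY : Measurable Y)
    (hindep : ProbabilityTheory.IndepFun X Y P)
    (hXt : ∀ S : Set (I → Ω₁), MeasurableSet[tailAlg Ω₁ I] S →
      P (X ⁻¹' S) = 0 ∨ P (X ⁻¹' S) = 1)
    (hYt : ∀ S : Set (I → Ω₂), MeasurableSet[tailAlg Ω₂ I] S →
      P (Y ⁻¹' S) = 0 ∨ P (Y ⁻¹' S) = 1) :
    ∀ S : Set (I → Ω₁ × Ω₂), MeasurableSet[tailAlg (Ω₁ × Ω₂) I] S →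
      P ((fun a i => (X a i, Y a i)) ⁻¹' S) = 0 ∨
        P ((fun a i => (X a i, Y a i)) ⁻¹' S) = 1 := by
  intro S hS
  set Φ : (I → Ω₁) × (I → Ω₂) → I → Ω₁ × Ω₂ := fun p i => (p.1 i, p.2 i) with hΦdef
  have hΦ : Measurable Φ := by
    apply measurable_pi_lambda
    exact fun i => ((measurable_pi_apply i).comp measurable_fst).prodMk
      ((measurable_pi_apply i).comp measurable_snd)
  have hSamb : MeasurableSet S := tailAlg_le_pi _ hS
  set μ := P.map X with hμdef
  set ν := P.map Y with hνdef
  haveI : IsProbabilityMeasure μ := Measure.isProbabilityMeasure_map hX.aemeasurable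
  haveI : IsProbabilityMeasure ν := Measure.isProbabilityMeasure_map hY.aemeasurable
  have hmap : P.map (fun a => (X a, Y a)) = μ.prod ν :=
    (ProbabilityTheory.indepFun_iff_map_prod_eq_prod_map_map hX.aemeasurable
      hY.aemeasurable).mp hindep
  have hA : MeasurableSet (Φ ⁻¹' S) := hΦ hSamb
  have key : P ((fun a i => (X a i, Y a i)) ⁻¹' S) = (μ.prod ν) (Φ ⁻¹' S) := by
    rw [← hmap, Measure.map_apply (hX.prodMk hY) hA]
    rfl
  rw [key, Measure.prod_apply hA]
  -- sections are tail measurable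
  have hsec : ∀ x : I → Ω₁, MeasurableSet[tailAlg Ω₂ I] (Prod.mk x ⁻¹' (Φ ⁻¹' S)) := by
    intro x
    rw [measurableSet_tailAlg_iff]
    intro J hJ
    have hSJ : MeasurableSet[cylAlg (Ω₁ × Ω₂) J] S := measurableSet_tailAlg_iff.mp hS J hJ
    have hg : Measurable[cylAlg Ω₂ J, cylAlg (Ω₁ × Ω₂) J] (fun y => Φ (x, y)) := by
      refine measurable_into_cylAlg fun i hi => ?_
      exact Measurable.prodMk measurable_const (measurable_eval_cylAlg hi)
    exact hg hSJ
  have hval : ∀ x, ν (Prod.mk x ⁻¹' (Φ ⁻¹' S)) = 0 ∨ ν (Prod.mk x ⁻¹' (Φ ⁻¹' S)) = 1 := by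
    intro x
    rw [hνdef, Measure.map_apply hY (tailAlg_le_pi _ (hsec x))]
    exact hYt _ (hsec x)
  set T : Set (I → Ω₁) := {x | ν (Prod.mk x ⁻¹' (Φ ⁻¹' S)) = 1} with hTdef
  have hTtail : MeasurableSet[tailAlg Ω₁ I] T := by
    rw [measurableSet_tailAlg_iff]
    intro J hJ
    have hSJ : MeasurableSet[cylAlg (Ω₁ × Ω₂) J] S := measurableSet_tailAlg_iff.mp hS J hJ
    have hΦJ : Measurable[(cylAlg Ω₁ J).prod MeasurableSpace.pi, cylAlg (Ω₁ × Ω₂) J] Φ := by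
      refine measurable_into_cylAlg fun i hi => ?_
      exact Measurable.prodMk
        (Measurable.comp (measurable_eval_cylAlg hi) measurable_fst)
        (Measurable.comp (measurable_pi_apply i) measurable_snd)
    have hAJ : MeasurableSet[(cylAlg Ω₁ J).prod MeasurableSpace.pi] (Φ ⁻¹' S) := hΦJ hSJ
    have hmeasfun : Measurable[cylAlg Ω₁ J] (fun x => ν (Prod.mk x ⁻¹' (Φ ⁻¹' S))) :=
      @measurable_measure_prodMk_left (I → Ω₁) (I → Ω₂) (cylAlg Ω₁ J) _ ν _ _ hAJ
    exact hmeasfun (measurableSet_singleton 1)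
  have hTamb : MeasurableSet T := tailAlg_le_pi _ hTtail
  have hind : ∀ x, ν (Prod.mk x ⁻¹' (Φ ⁻¹' S)) = T.indicator (1 : (I → Ω₁) → ℝ≥0∞) x := by
    intro x
    rcases hval x with h | h
    · have hx : x ∉ T := by
        intro hx
        rw [hTdef] at hx
        simp only [Set.mem_setOf_eq] at hx
        rw [hx] at h
        exact one_ne_zero h
      rw [h, Set.indicator_of_notMem hx]
    · have hx : x ∈ T := h
      rw [h, Set.indicator_of_mem hx]
      rfl
  rw [lintegral_congr hind, lintegral_indicator_one hTamb]
  rw [hμdef, Measure.map_apply hX hTamb]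
  exact hXt T hTtail

/-- Dropping the first variable preserves joint independence. -/
lemma iIndepFun_succ {Ω α : Type*} [MeasurableSpace Ω] [MeasurableSpace α]
    {P : Measure α} {k : ℕ} {B : Fin (k + 1) → α → I → Ω}
    (h : ProbabilityTheory.iIndepFun B P) :
    ProbabilityTheory.iIndepFun (fun j : Fin k => B j.succ) P := by
  classical
  rw [ProbabilityTheory.iIndepFun_iff_measure_inter_preimage_eq_mul] at h ⊢
  intro S sets hsets
  have key := h (S.map ⟨Fin.succ, Fin.succ_injective k⟩)
    (sets := fun i : Fin (k + 1) => Fin.cases Set.univ sets i) ?_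
  · have h1 : (⋂ i ∈ S.map ⟨Fin.succ, Fin.succ_injective k⟩,
        B i ⁻¹' (Fin.cases Set.univ sets i : Set (I → Ω)))
        = ⋂ j ∈ S, B j.succ ⁻¹' sets j := by
      ext a
      simp only [Set.mem_iInter, Finset.mem_map, Function.Embedding.coeFn_mk]
      constructor
      · intro hmem j hj
        have := hmem j.succ ⟨j, hj, rfl⟩
        simpa using this
      · rintro hmem i ⟨j, hj, rfl⟩
        simpa using hmem j hj
    have h2 : (∏ i ∈ S.map ⟨Fin.succ, Fin.succ_injective k⟩,
        P (B i ⁻¹' (Fin.cases Set.univ sets i : Set (I → Ω))))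
        = ∏ j ∈ S, P (B j.succ ⁻¹' sets j) := by
      rw [Finset.prod_map]
      refine Finset.prod_congr rfl fun j _ => ?_
      simp
    rw [h1, h2] at key
    exact key
  · intro i hi
    rcases Finset.mem_map.mp hi with ⟨j, hj, rfl⟩
    simpa using hsets j hj

end Aux

theorem stmt4 {Ω : Type*} [MeasurableSpace Ω] {I : Type*} [Countable I]
    {α : Type*} [MeasurableSpace α] (P : Measure α) [IsProbabilityMeasure P]
    (k : ℕ) (B : Fin k → α → I → Ω) (hmeas : ∀ j, Measurable (B j))
    (hindep : ProbabilityTheory.iIndepFun B P)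
    (htriv : ∀ j, ∀ S : Set (I → Ω), MeasurableSet[tailAlg Ω I] S →
      P (B j ⁻¹' S) = 0 ∨ P (B j ⁻¹' S) = 1) :
    ∀ S : Set (I → (Fin k → Ω)), MeasurableSet[tailAlg (Fin k → Ω) I] S →
      P ((fun a i j => B j a i) ⁻¹' S) = 0 ∨ P ((fun a i j => B j a i) ⁻¹' S) = 1 := by
  induction k with
  | zero =>
    intro S _
    classical
    have hall : ∀ f g : I → Fin 0 → Ω, f = g :=
      fun f g => funext fun i => funext fun j => j.elim0
    by_cases hc : (fun (_ : I) (j : Fin 0) => j.elim0) ∈ S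
    · right
      have heq : (fun a i (j : Fin 0) => B j a i) ⁻¹' S = Set.univ := by
        ext a
        simp only [Set.mem_preimage, Set.mem_univ, iff_true]
        rw [hall (fun i j => B j a i) (fun _ j => j.elim0)]
        exact hc
      rw [heq]; simp
    · left
      have heq : (fun a i (j : Fin 0) => B j a i) ⁻¹' S = ∅ := by
        ext a
        simp only [Set.mem_preimage, Set.mem_empty_iff_false, iff_false]
        intro hmem
        apply hc
        rw [hall (fun _ j => j.elim0) (fun i j => B j a i)]
        exact hmem
      rw [heq]; simp
  | succ k IH =>
    intro S hS
    classical
    -- the two halves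
    set X : α → I → Ω := B 0 with hXdef
    set Y : α → I → (Fin k → Ω) := fun a i j => B j.succ a i with hYdef
    have hXmeas : Measurable X := hmeas 0
    have hYmeas : Measurable Y := by
      apply measurable_pi_lambda
      intro i
      apply measurable_pi_lambda
      intro j
      exact (measurable_pi_apply i).comp (hmeas j.succ)
    -- independence of X and Y
    have hindXY : ProbabilityTheory.IndepFun X Y P := by
      have hfin := hindep.indepFun_finset {0} (Finset.univ.map ⟨Fin.succ, Fin.succ_injective k⟩)
        (by
          simp only [Finset.disjoint_left, Finset.mem_singleton, Finset.mem_map,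
            Function.Embedding.coeFn_mk]
          rintro i rfl ⟨j, _, hj⟩
          exact (Fin.succ_ne_zero j) hj) hmeas
      have h0 : (0 : Fin (k + 1)) ∈ ({0} : Finset (Fin (k + 1))) := Finset.mem_singleton_self 0
      have hmemT : ∀ j : Fin k, j.succ ∈ Finset.univ.map ⟨Fin.succ, Fin.succ_injective k⟩ :=
        fun j => Finset.mem_map.mpr ⟨j, Finset.mem_univ j, rfl⟩
      set TT := Finset.univ.map ⟨Fin.succ, Fin.succ_injective k⟩ with hTTdef
      have hφ : Measurable (fun v : ({0} : Finset (Fin (k + 1))) → I → Ω =>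
          v ⟨0, h0⟩) := measurable_pi_apply _
      have hψ : Measurable (fun v : ↥TT → I → Ω =>
          (fun i (j : Fin k) => v ⟨j.succ, hmemT j⟩ i : I → Fin k → Ω)) := by
        apply measurable_pi_lambda
        intro i
        apply measurable_pi_lambda
        intro j
        exact (measurable_pi_apply i).comp (measurable_pi_apply _)
      exact hfin.comp hφ hψ
    -- tail triviality of Y by the induction hypothesis
    have hYt : ∀ T : Set (I → (Fin k → Ω)), MeasurableSet[tailAlg (Fin k → Ω) I] T →
        P (Y ⁻¹' T) = 0 ∨ P (Y ⁻¹' T) = 1 :=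
      IH (fun j => B j.succ) (fun j => hmeas j.succ) (iIndepFun_succ hindep)
        (fun j => htriv j.succ)
    -- combine with the pair lemma
    set cmap : (I → Ω × (Fin k → Ω)) → I → (Fin (k + 1) → Ω) :=
      fun f i => Fin.cons (f i).1 (f i).2 with hcmapdef
    have hcS : MeasurableSet[tailAlg (Ω × (Fin k → Ω)) I] (cmap ⁻¹' S) := by
      rw [measurableSet_tailAlg_iff]
      intro J hJ
      have hSJ : MeasurableSet[cylAlg (Fin (k + 1) → Ω) J] S :=
        measurableSet_tailAlg_iff.mp hS J hJ
      have hφm : Measurable (fun p : Ω × (Fin k → Ω) => (Fin.cons p.1 p.2 : Fin (k + 1) → Ω)) := by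
        apply measurable_pi_lambda
        intro j
        induction j using Fin.cases with
        | zero => simpa using measurable_fst
        | succ j => simpa [Function.comp_def] using (measurable_pi_apply j).comp measurable_snd
      have hg : Measurable[cylAlg (Ω × (Fin k → Ω)) J, cylAlg (Fin (k + 1) → Ω) J] cmap := by
        refine measurable_into_cylAlg fun i hi => ?_
        exact hφm.comp (measurable_eval_cylAlg hi)
      exact hg hSJ
    have hkey := pair_tail_trivial P hXmeas hYmeas hindXY (htriv 0) hYt (cmap ⁻¹' S) hcS
    have heq : ((fun a i => (X a i, Y a i)) ⁻¹' (cmap ⁻¹' S))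
        = (fun a i (j : Fin (k + 1)) => B j a i) ⁻¹' S := by
      ext a
      simp only [Set.mem_preimage]
      have : cmap (fun i => (X a i, Y a i)) = fun i j => B j a i := by
        funext i j
        induction j using Fin.cases with
        | zero => simp [hcmapdef, hXdef]
        | succ j => simp [hcmapdef, hYdef]
      rw [this]
    rw [heq] at hkey
    exact hkey
end

section
/- Let G = (V, E) be an infinite, connected, locally finite graph that is transient and Liouville, and let X and Y be independent lazy random walks on G started at any two vertices. If the event that X and Y intersect only finitely often (i.e., that the set {(n, m) ∈ ℕ² : X_n = Y_m} is finite) has positive probability, then this event has probability one. -/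
open MeasureTheory Filter

open scoped Classical

/-- One-step transition probabilities of the lazy random walk on `G`: stay put with
probability `1/2`, otherwise move to a uniformly chosen neighbour. -/
noncomputable def lazyStep {V : Type*} (G : SimpleGraph V) (u w : V) : ENNReal :=
  if u = w then 2⁻¹ else if G.Adj u w then 2⁻¹ / ((G.neighborSet u).ncard : ENNReal) else 0

/-- `μ` is the law of the lazy random walk on `G` started at `v`: its finite-dimensional
distributions are given by the products of the lazy transition probabilities. -/
noncomputable def IsLazyWalkLaw {V : Type*} [MeasurableSpace V] (G : SimpleGraph V) (v : V)
    (μ : Measure (ℕ → V)) : Prop :=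
  ∀ (n : ℕ) (p : Fin (n + 1) → V),
    μ {x | ∀ i : Fin (n + 1), x i = p i} =
      (if p 0 = v then 1 else 0) * ∏ i : Fin n, lazyStep G (p i.castSucc) (p i.succ)

/-- A function `h : V → ℝ` is harmonic on `G` if at every vertex it equals the average of
its values over the neighbours. -/
def IsHarmonic {V : Type*} (G : SimpleGraph V) (h : V → ℝ) : Prop :=
  ∀ v, h v = (∑ᶠ w ∈ G.neighborSet v, h w) / ((G.neighborSet v).ncard : ℝ)

/-- A graph is Liouville if every bounded harmonic function on it is constant. -/
def LiouvilleGraph {V : Type*} (G : SimpleGraph V) : Prop :=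
  ∀ h : V → ℝ, IsHarmonic G h → (∃ C : ℝ, ∀ v, |h v| ≤ C) → ∀ u w, h u = h w

/-- `G` is transient: the lazy random walk started anywhere almost surely visits every
vertex only finitely often. -/
def TransientGraph {V : Type*} [MeasurableSpace V] (G : SimpleGraph V) : Prop :=
  ∀ (u : V) (μ : Measure (ℕ → V)), IsProbabilityMeasure μ → IsLazyWalkLaw G u μ →
    ∀ᵐ x ∂μ, ∀ w : V, {n : ℕ | x n = w}.Finite

section Aux

variable {V : Type*} (G : SimpleGraph V)

/-- Cylinder set in path space. -/
def Cyl (n : ℕ) (p : ℕ → V) : Set (ℕ → V) := {x | ∀ i ≤ n, x i = p i}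

/-- Weight of a path of length `n` started at `x`. -/
noncomputable def stepW (x : V) (n : ℕ) (s : ℕ → V) : ENNReal :=
  (if s 0 = x then 1 else 0) * ∏ i ∈ Finset.range n, lazyStep G (s i) (s (i + 1))

variable {G}

variable (hlf : ∀ v, (G.neighborSet v).Finite)
include hlf

lemma ncard_pos_of_adj {u w : V} (h : G.Adj u w) : 1 ≤ ((G.neighborSet u).ncard : ENNReal) := by
  have : 0 < (G.neighborSet u).ncard := (Set.ncard_pos (hlf u)).mpr ⟨w, h⟩
  exact_mod_cast this

lemma lazyStep_le_half (u w : V) : lazyStep G u w ≤ 2⁻¹ := by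
  unfold lazyStep
  split_ifs with h1 h2
  · exact le_rfl
  · exact ENNReal.div_le_of_le_mul (le_mul_of_one_le_right zero_le (ncard_pos_of_adj hlf h2))
  · exact zero_le

lemma lazyStep_ne_top (u w : V) : lazyStep G u w ≠ ⊤ :=
  ((lazyStep_le_half hlf u w).trans_lt (by simp)).ne

lemma stepW_ne_top (x : V) (n : ℕ) (s : ℕ → V) : stepW G x n s ≠ ⊤ := by
  unfold stepW
  refine ENNReal.mul_ne_top (by split_ifs <;> simp) ?_
  exact (ENNReal.prod_lt_top (fun i _ => (lazyStep_ne_top hlf (s i) (s (i+1))).lt_top)).ne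

omit hlf

lemma law_cyl {v : V} [MeasurableSpace V] {μ : Measure (ℕ → V)}
    (hμ : IsLazyWalkLaw G v μ) (n : ℕ) (p : ℕ → V) :
    μ (Cyl n p) = stepW G v n p := by
  have h := hμ n (fun i => p i)
  have hset : {x : ℕ → V | ∀ i : Fin (n + 1), x i = p i} = Cyl n p := by
    ext x
    constructor
    · intro hx i hi
      exact hx ⟨i, Nat.lt_succ_of_le hi⟩
    · intro hx i
      exact hx i (Nat.lt_succ_iff.mp i.isLt)
  rw [hset] at h
  rw [h, stepW]
  congr 1
  rw [← Fin.prod_univ_eq_prod_range (fun i => lazyStep G (p i) (p (i + 1))) n]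
  exact Finset.prod_congr rfl fun i _ => by simp [Fin.coe_castSucc, Fin.val_succ]


lemma countable_of_connected (hconn : G.Connected) (hlf : ∀ v, (G.neighborSet v).Finite) :
    Countable V := by
  obtain ⟨u⟩ := hconn.nonempty
  let S : ℕ → Set V := fun n => Nat.rec {u} (fun _ T => T ∪ ⋃ v ∈ T, G.neighborSet v) n
  have hfin : ∀ n, (S n).Finite := by
    intro n
    induction n with
    | zero => exact Set.finite_singleton u
    | succ n ih => exact ih.union (ih.biUnion (fun v _ => hlf v))
  have hmem : ∀ {v w : V} (p : G.Walk v w), w = u → v ∈ S p.length := by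
    intro v w p
    induction p with
    | nil => rintro rfl; exact rfl
    | cons h q ih =>
      intro hw
      have hb := ih hw
      exact Or.inr (Set.mem_biUnion hb h.symm)
  have huniv : (Set.univ : Set V).Countable := by
    have : (Set.univ : Set V) ⊆ ⋃ n, S n := by
      intro v _
      obtain ⟨p⟩ := hconn.preconnected v u
      exact Set.mem_iUnion.mpr ⟨p.length, hmem p rfl⟩
    exact (Set.countable_iUnion (fun n => (hfin n).countable)).mono this
  exact Set.countable_univ_iff.mp huniv

lemma measurableSet_cyl [MeasurableSpace V] [DiscreteMeasurableSpace V] (n : ℕ) (p : ℕ → V) :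
    MeasurableSet (Cyl n p) := by
  have : Cyl n p = ⋂ i ∈ Finset.range (n + 1), (fun x : ℕ → V => x i) ⁻¹' {p i} := by
    ext x
    simp [Cyl, Nat.lt_succ_iff]
  rw [this]
  exact MeasurableSet.biInter (Finset.range (n + 1)).countable_toSet
    (fun i _ => (measurable_pi_apply i) (MeasurableSet.of_discrete))

/-- Concatenation of a path of length `n` with a continuation. -/
def concatP (n : ℕ) (p s : ℕ → V) : ℕ → V := fun i => if i ≤ n then p i else s (i - n)

lemma concatP_le {n : ℕ} {p s : ℕ → V} {i : ℕ} (hi : i ≤ n) : concatP n p s i = p i :=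
  if_pos hi

lemma concatP_shift {n : ℕ} {p s : ℕ → V} (hs : s 0 = p n) (i : ℕ) :
    concatP n p s (n + i) = s i := by
  rcases Nat.eq_zero_or_pos i with rfl | hi
  · simpa [concatP] using hs.symm
  · have : ¬ n + i ≤ n := by omega
    simp only [concatP, if_neg this]
    congr 1
    omega

/-- The shift map on path space. -/
def shiftP (n : ℕ) (x : ℕ → V) : ℕ → V := fun i => x (n + i)

lemma measurable_shiftP [MeasurableSpace V] (n : ℕ) : Measurable (shiftP (V := V) n) :=
  measurable_pi_lambda _ (fun i => measurable_pi_apply (n + i))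

lemma cyl_inter_shift {n k : ℕ} {p s : ℕ → V} (hs : s 0 = p n) :
    Cyl n p ∩ shiftP n ⁻¹' Cyl k s = Cyl (n + k) (concatP n p s) := by
  ext x
  constructor
  · rintro ⟨h1, h2⟩ i hi
    by_cases hin : i ≤ n
    · rw [concatP_le hin]; exact h1 i hin
    · have : i = n + (i - n) := by omega
      rw [this, concatP_shift hs]
      exact h2 (i - n) (by omega)
  · intro h
    constructor
    · intro i hi
      rw [show p i = concatP n p s i from (concatP_le hi).symm]
      exact h i (by omega)
    · intro i hi
      rw [← concatP_shift hs]
      exact h (n + i) (by omega)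

lemma cyl_inter_shift_empty {n k : ℕ} {p s : ℕ → V} (hs : s 0 ≠ p n) :
    Cyl n p ∩ shiftP n ⁻¹' Cyl k s = ∅ := by
  ext x
  simp only [Set.mem_inter_iff, Set.mem_empty_iff_false, iff_false, not_and]
  intro h1 h2
  have hx1 : x n = p n := h1 n le_rfl
  have hx2 : x n = s 0 := h2 0 (Nat.zero_le _)
  exact hs (hx2 ▸ hx1)

lemma stepW_concat {n k : ℕ} {p s : ℕ → V} (hs : s 0 = p n) (v : V) :
    stepW G v (n + k) (concatP n p s) = stepW G v n p * stepW G (p n) k s := by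
  unfold stepW
  rw [if_pos hs, Finset.prod_range_add]
  have h0 : concatP n p s 0 = p 0 := concatP_le (Nat.zero_le n)
  have hstep1 : ∀ i ∈ Finset.range n,
      lazyStep G (concatP n p s i) (concatP n p s (i + 1)) = lazyStep G (p i) (p (i + 1)) := by
    intro i hi
    have hi' := Finset.mem_range.mp hi
    rw [concatP_le (by omega), concatP_le (by omega)]
  have hstep2 : ∀ i ∈ Finset.range k,
      lazyStep G (concatP n p s (n + i)) (concatP n p s (n + i + 1)) =
        lazyStep G (s i) (s (i + 1)) := by
    intro i _
    have h1 : n + i + 1 = n + (i + 1) := by omega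
    rw [concatP_shift hs, h1, concatP_shift hs]
  rw [Finset.prod_congr rfl hstep1, Finset.prod_congr rfl hstep2, h0]
  ring


variable (V) in
/-- The collection of cylinder sets. -/
def CylSets : Set (Set (ℕ → V)) := {S | ∃ n p, S = Cyl n p}

lemma isPiSystem_cylSets : IsPiSystem (CylSets V) := by
  rintro _ ⟨n, p, rfl⟩ _ ⟨m, q, rfl⟩ hne
  obtain ⟨x, hx1, hx2⟩ := hne
  rcases le_total n m with h | h
  · have hsub : Cyl m q ⊆ Cyl n p := by
      intro y hy i hi
      rw [hy i (hi.trans h), ← hx2 i (hi.trans h), hx1 i hi]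
    exact ⟨m, q, Set.inter_eq_self_of_subset_right hsub⟩
  · have hsub : Cyl n p ⊆ Cyl m q := by
      intro y hy i hi
      rw [hy i (hi.trans h), ← hx1 i (hi.trans h), hx2 i hi]
    exact ⟨n, p, Set.inter_eq_self_of_subset_left hsub⟩

lemma isCountablySpanning_cylSets [Countable V] [Nonempty V] :
    IsCountablySpanning (CylSets V) := by
  obtain ⟨f, hf⟩ := exists_surjective_nat V
  refine ⟨fun n => Cyl 0 (fun _ => f n), fun n => ⟨0, _, rfl⟩, ?_⟩
  ext x
  simp only [Set.mem_iUnion, Set.mem_univ, iff_true]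
  obtain ⟨n, hn⟩ := hf (x 0)
  refine ⟨n, fun i hi => ?_⟩
  have : i = 0 := Nat.le_zero.mp hi
  rw [this, hn]

lemma generateFrom_cylSets [MeasurableSpace V] [DiscreteMeasurableSpace V] [Countable V] :
    MeasurableSpace.generateFrom (CylSets V) = (inferInstance : MeasurableSpace (ℕ → V)) := by
  refine le_antisymm (MeasurableSpace.generateFrom_le ?_) ?_
  · rintro _ ⟨n, p, rfl⟩
    exact measurableSet_cyl n p
  · have heval : ∀ i : ℕ, @Measurable (ℕ → V) V
        (MeasurableSpace.generateFrom (CylSets V)) _ (fun x => x i) := by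
      intro i
      refine @measurable_to_countable' V (ℕ → V) _ _
        (MeasurableSpace.generateFrom (CylSets V)) _ ?_
      intro v
      have : (fun x : ℕ → V => x i) ⁻¹' {v} =
          ⋃ q : {q : Fin (i + 1) → V // q ⟨i, Nat.lt_succ_self i⟩ = v},
            Cyl i (fun j => if h : j ≤ i then (q : Fin (i + 1) → V) ⟨j, Nat.lt_succ_of_le h⟩
              else v) := by
        ext x
        simp only [Set.mem_preimage, Set.mem_singleton_iff, Set.mem_iUnion]
        constructor
        · intro hx
          refine ⟨⟨fun j => x j, hx⟩, ?_⟩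
          intro j hj
          simp [dif_pos hj]
        · rintro ⟨q, hq⟩
          have := hq i le_rfl
          simpa [q.2] using this
      rw [this]
      exact @MeasurableSet.iUnion _ _ (MeasurableSpace.generateFrom (CylSets V)) _ _ fun q =>
        MeasurableSpace.measurableSet_generateFrom ⟨i, _, rfl⟩
    show (MeasurableSpace.pi : MeasurableSpace (ℕ → V)) ≤ _
    exact iSup_le fun i => measurable_iff_comap_le.mp (heval i)

variable (V) in
/-- Rectangles of cylinder sets in the pair path space. -/
def PairCylSets : Set (Set ((ℕ → V) × (ℕ → V))) :=
  Set.image2 (· ×ˢ ·) (CylSets V) (CylSets V)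

lemma isPiSystem_pairCylSets : IsPiSystem (PairCylSets V) :=
  IsPiSystem.prod isPiSystem_cylSets isPiSystem_cylSets

lemma generateFrom_pairCylSets [MeasurableSpace V] [DiscreteMeasurableSpace V] [Countable V]
    [Nonempty V] :
    MeasurableSpace.generateFrom (PairCylSets V) = Prod.instMeasurableSpace :=
  generateFrom_eq_prod generateFrom_cylSets generateFrom_cylSets
    isCountablySpanning_cylSets isCountablySpanning_cylSets


/-- Extension of a path by one vertex. -/
def extP (n : ℕ) (p : ℕ → V) (x' : V) : ℕ → V := fun i => if i ≤ n then p i else x'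

lemma extP_le {n : ℕ} {p : ℕ → V} {x' : V} {i : ℕ} (hi : i ≤ n) : extP n p x' i = p i :=
  if_pos hi

lemma extP_top {n : ℕ} {p : ℕ → V} {x' : V} : extP n p x' (n + 1) = x' :=
  if_neg (by omega)

lemma stepW_extP (v : V) (n : ℕ) (p : ℕ → V) (x' : V) :
    stepW G v (n + 1) (extP n p x') = stepW G v n p * lazyStep G (p n) x' := by
  unfold stepW
  rw [Finset.prod_range_succ]
  have h1 : ∀ i ∈ Finset.range n,
      lazyStep G (extP n p x' i) (extP n p x' (i + 1)) = lazyStep G (p i) (p (i + 1)) := by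
    intro i hi
    have := Finset.mem_range.mp hi
    rw [extP_le (by omega), extP_le (by omega)]
  rw [show extP n p x' 0 = p 0 from extP_le (Nat.zero_le n),
    Finset.prod_congr rfl h1, extP_le (Nat.le_refl n), extP_top]
  ring

lemma cyl_eq_iUnion_extP (n : ℕ) (p : ℕ → V) :
    Cyl n p = ⋃ x' : V, Cyl (n + 1) (extP n p x') := by
  ext x
  simp only [Set.mem_iUnion]
  constructor
  · intro hx
    refine ⟨x (n + 1), fun i hi => ?_⟩
    by_cases h : i ≤ n
    · rw [extP_le h]; exact hx i h
    · have : i = n + 1 := by omega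
      rw [this, extP_top]
  · rintro ⟨x', hx⟩ i hi
    rw [show p i = extP n p x' i from (extP_le hi).symm]
    exact hx i (by omega)

lemma cyl_extP_disjoint (n : ℕ) (p : ℕ → V) :
    Pairwise (Function.onFun Disjoint fun x' : V => Cyl (n + 1) (extP n p x')) := by
  intro a b hab
  refine Set.disjoint_left.mpr fun x hxa hxb => hab ?_
  have h1 : x (n + 1) = a := by rw [hxa (n + 1) le_rfl, extP_top]
  have h2 : x (n + 1) = b := by rw [hxb (n + 1) le_rfl, extP_top]
  rw [← h1, h2]


variable (V) in
/-- Pairs of trajectories having finitely many intersection times. -/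
def DSet : Set ((ℕ → V) × (ℕ → V)) := {z | {pr : ℕ × ℕ | z.1 pr.1 = z.2 pr.2}.Finite}

lemma dSet_eq :
    DSet V = ⋃ N : ℕ, ⋂ n : ℕ, ⋂ m : ℕ,
      ({_z : (ℕ → V) × (ℕ → V) | n ≤ N ∧ m ≤ N} ∪ {z | ¬ z.1 n = z.2 m}) := by
  ext z
  simp only [DSet, Set.mem_setOf_eq, Set.mem_iUnion, Set.mem_iInter, Set.mem_union,
    Set.mem_setOf_eq]
  constructor
  · intro hfin
    obtain ⟨N1, hN1⟩ := (hfin.image Prod.fst).bddAbove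
    obtain ⟨N2, hN2⟩ := (hfin.image Prod.snd).bddAbove
    refine ⟨max N1 N2, fun n m => ?_⟩
    by_cases h : z.1 n = z.2 m
    · left
      have hmem : (n, m) ∈ {pr : ℕ × ℕ | z.1 pr.1 = z.2 pr.2} := h
      exact ⟨(hN1 (Set.mem_image_of_mem _ hmem)).trans (le_max_left _ _),
        (hN2 (Set.mem_image_of_mem _ hmem)).trans (le_max_right _ _)⟩
    · right; exact h
  · rintro ⟨N, hN⟩
    refine ((Set.finite_Icc 0 N).prod (Set.finite_Icc 0 N)).subset ?_
    rintro ⟨n, m⟩ hmem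
    rcases hN n m with h | h
    · exact ⟨⟨Nat.zero_le _, h.1⟩, ⟨Nat.zero_le _, h.2⟩⟩
    · exact absurd hmem h

lemma measurableSet_dSet [MeasurableSpace V] [DiscreteMeasurableSpace V] [Countable V] :
    MeasurableSet (DSet V) := by
  rw [dSet_eq]
  refine MeasurableSet.iUnion fun N => MeasurableSet.iInter fun n =>
    MeasurableSet.iInter fun m => (MeasurableSet.const _).union ?_
  exact (measurableSet_eq_fun
    ((measurable_pi_apply n).comp measurable_fst)
    ((measurable_pi_apply m).comp measurable_snd)).compl

variable (V) in
/-- Trajectories visiting every vertex finitely often. -/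
def GoodSet : Set (ℕ → V) := {x | ∀ w : V, {n : ℕ | x n = w}.Finite}

lemma measurableSet_goodSet [MeasurableSpace V] [DiscreteMeasurableSpace V] [Countable V] :
    MeasurableSet (GoodSet V) := by
  have : GoodSet V = ⋂ w : V, ⋃ N : ℕ, ⋂ n : ℕ,
      ({_x : ℕ → V | n ≤ N} ∪ {x | ¬ x n = w}) := by
    ext x
    simp only [GoodSet, Set.mem_setOf_eq, Set.mem_iInter, Set.mem_iUnion, Set.mem_union,
      Set.mem_setOf_eq]
    constructor
    · intro h w
      obtain ⟨N, hN⟩ := (h w).bddAbove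
      refine ⟨N, fun n => ?_⟩
      by_cases hx : x n = w
      · exact Or.inl (hN hx)
      · exact Or.inr hx
    · intro h w
      obtain ⟨N, hN⟩ := h w
      refine (Set.finite_Icc 0 N).subset fun n hn => ⟨Nat.zero_le _, ?_⟩
      rcases hN n with h' | h'
      · exact h'
      · exact absurd hn h'
  rw [this]
  refine MeasurableSet.iInter fun w => MeasurableSet.iUnion fun N =>
    MeasurableSet.iInter fun n => (MeasurableSet.const _).union ?_
  have h1 : MeasurableSet ((fun x : ℕ → V => x n) ⁻¹' {w}) :=
    (measurable_pi_apply n) (MeasurableSet.of_discrete : MeasurableSet ({w} : Set V))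
  have h2 : {x : ℕ → V | x n = w} = (fun x : ℕ → V => x n) ⁻¹' {w} := rfl
  exact (h2 ▸ h1).compl

/-- If both trajectories are good, the shifted pair is in `DSet` iff the original pair is. -/
lemma shift_dSet_iff {x y : ℕ → V} (hx : x ∈ GoodSet V) (hy : y ∈ GoodSet V) (n m : ℕ) :
    (shiftP n x, shiftP m y) ∈ DSet V ↔ (x, y) ∈ DSet V := by
  simp only [DSet, Set.mem_setOf_eq]
  constructor
  · intro hfin
    have hsub : {pr : ℕ × ℕ | x pr.1 = y pr.2} ⊆
        ((fun pr : ℕ × ℕ => (n + pr.1, m + pr.2)) '' {pr : ℕ × ℕ | shiftP n x pr.1 = shiftP m y pr.2})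
        ∪ (⋃ i ∈ Finset.range n, {i} ×ˢ {j | y j = x i})
        ∪ (⋃ j ∈ Finset.range m, {i | x i = y j} ×ˢ {j}) := by
      rintro ⟨i, j⟩ hij
      by_cases hi : i < n
      · exact Or.inl (Or.inr (Set.mem_biUnion (Finset.mem_range.mpr hi)
          ⟨rfl, hij.symm⟩))
      · by_cases hj : j < m
        · exact Or.inr (Set.mem_biUnion (Finset.mem_range.mpr hj) ⟨hij, rfl⟩)
        · refine Or.inl (Or.inl ⟨(i - n, j - m), ?_, ?_⟩)
          · show x (n + (i - n)) = y (m + (j - m))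
            rw [show n + (i - n) = i by omega, show m + (j - m) = j by omega]
            exact hij
          · show (n + (i - n), m + (j - m)) = (i, j)
            rw [show n + (i - n) = i by omega, show m + (j - m) = j by omega]
    refine Set.Finite.subset ?_ hsub
    refine ((hfin.image _).union ?_).union ?_
    · exact Set.Finite.biUnion (Finset.range n).finite_toSet
        (fun i _ => (Set.finite_singleton i).prod (hy (x i)))
    · exact Set.Finite.biUnion (Finset.range m).finite_toSet
        (fun j _ => ((hx (y j)).prod (Set.finite_singleton j)))
  · intro hfin
    have : {pr : ℕ × ℕ | shiftP n x pr.1 = shiftP m y pr.2} ⊆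
        (fun pr : ℕ × ℕ => (n + pr.1, m + pr.2)) ⁻¹' {pr : ℕ × ℕ | x pr.1 = y pr.2} := by
      rintro ⟨i, j⟩ hij
      exact hij
    refine Set.Finite.subset (Set.Finite.preimage ?_ hfin) this
    intro a _ b _ hab
    simpa [Prod.ext_iff] using (by
      obtain ⟨h1, h2⟩ := Prod.mk.injEq .. ▸ hab
      exact Prod.ext (by omega) (by omega) : a = b)


lemma stepW_walk_ne_zero {v x : V} (hlf : ∀ v, (G.neighborSet v).Finite) (w : G.Walk v x) :
    stepW G v w.length w.getVert ≠ 0 := by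
  unfold stepW
  rw [if_pos w.getVert_zero]
  rw [one_mul]
  rw [Finset.prod_ne_zero_iff]
  intro i hi
  have hadj : G.Adj (w.getVert i) (w.getVert (i + 1)) :=
    w.adj_getVert_succ (Finset.mem_range.mp hi)
  unfold lazyStep
  rw [if_neg hadj.ne, if_pos hadj]
  rw [Ne, ENNReal.div_eq_zero_iff]
  push_neg
  exact ⟨by simp, ENNReal.natCast_ne_top _⟩

set_option linter.unusedSectionVars false

section MeasureLemmas

variable {α : Type*} [MeasurableSpace α] [MeasurableSpace V] [DiscreteMeasurableSpace V]

/-- The cylinder event for the pair of walks. -/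
def BSet (X Y : α → ℕ → V) (n m : ℕ) (p r : ℕ → V) : Set α :=
  X ⁻¹' Cyl n p ∩ Y ⁻¹' Cyl m r

lemma measurableSet_BSet {X Y : α → ℕ → V} (hX : Measurable X) (hY : Measurable Y)
    (n m : ℕ) (p r : ℕ → V) : MeasurableSet (BSet X Y n m p r) :=
  (hX (measurableSet_cyl n p)).inter (hY (measurableSet_cyl m r))

variable {P : Measure α} [IsProbabilityMeasure P] {u₀ v₀ : V} {X Y : α → ℕ → V}

lemma BSet_measure (hX : Measurable X) (hY : Measurable Y)
    (hXlaw : IsLazyWalkLaw G u₀ (P.map X)) (hYlaw : IsLazyWalkLaw G v₀ (P.map Y))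
    (hindep : ProbabilityTheory.IndepFun X Y P) (n m : ℕ) (p r : ℕ → V) :
    P (BSet X Y n m p r) = stepW G u₀ n p * stepW G v₀ m r := by
  rw [BSet, hindep.measure_inter_preimage_eq_mul _ _ (measurableSet_cyl n p)
    (measurableSet_cyl m r),
    ← Measure.map_apply hX (measurableSet_cyl n p),
    ← Measure.map_apply hY (measurableSet_cyl m r),
    law_cyl hXlaw, law_cyl hYlaw]

/-- The law of the shifted trajectories restricted to a cylinder event. -/
noncomputable def nuM (P : Measure α) (X Y : α → ℕ → V) (n m : ℕ) (p r : ℕ → V) :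
    Measure ((ℕ → V) × (ℕ → V)) :=
  (P.restrict (BSet X Y n m p r)).map (fun a => (shiftP n (X a), shiftP m (Y a)))

lemma measurable_pairShift (hX : Measurable X) (hY : Measurable Y) (n m : ℕ) :
    Measurable (fun a => (shiftP n (X a), shiftP m (Y a))) :=
  (((measurable_shiftP n).comp hX).prodMk ((measurable_shiftP m).comp hY))

lemma nuM_univ (hX : Measurable X) (hY : Measurable Y) (n m : ℕ) (p r : ℕ → V) :
    nuM P X Y n m p r Set.univ = P (BSet X Y n m p r) := by
  rw [nuM, Measure.map_apply (measurable_pairShift hX hY n m) MeasurableSet.univ]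
  simp [Measure.restrict_apply MeasurableSet.univ]

lemma nuM_cyl (hX : Measurable X) (hY : Measurable Y)
    (hXlaw : IsLazyWalkLaw G u₀ (P.map X)) (hYlaw : IsLazyWalkLaw G v₀ (P.map Y))
    (hindep : ProbabilityTheory.IndepFun X Y P) (n m : ℕ) (p r : ℕ → V)
    (k l : ℕ) (s t : ℕ → V) :
    nuM P X Y n m p r (Cyl k s ×ˢ Cyl l t) =
      P (BSet X Y n m p r) * (stepW G (p n) k s * stepW G (r m) l t) := by
  rw [nuM, Measure.map_apply (measurable_pairShift hX hY n m)
    ((measurableSet_cyl k s).prod (measurableSet_cyl l t)),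
    Measure.restrict_apply ((measurable_pairShift hX hY n m)
      ((measurableSet_cyl k s).prod (measurableSet_cyl l t)))]
  have hpre : (fun a => (shiftP n (X a), shiftP m (Y a))) ⁻¹' (Cyl k s ×ˢ Cyl l t) ∩
      BSet X Y n m p r =
      X ⁻¹' (Cyl n p ∩ shiftP n ⁻¹' Cyl k s) ∩ Y ⁻¹' (Cyl m r ∩ shiftP m ⁻¹' Cyl l t) := by
    ext a
    simp only [Set.mem_inter_iff, Set.mem_preimage, Set.mem_prod, BSet]
    tauto
  rw [hpre]
  by_cases hs : s 0 = p n
  · by_cases ht : t 0 = r m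
    · rw [cyl_inter_shift hs, cyl_inter_shift ht]
      have := BSet_measure hX hY hXlaw hYlaw hindep (n + k) (m + l)
        (concatP n p s) (concatP m r t)
      rw [BSet] at this
      rw [this, stepW_concat hs, stepW_concat ht,
        BSet_measure hX hY hXlaw hYlaw hindep n m p r]
      ring
    · rw [cyl_inter_shift_empty ht]
      simp only [Set.preimage_empty, Set.inter_empty, measure_empty]
      rw [show stepW G (r m) l t = 0 from by rw [stepW, if_neg ht, zero_mul]]
      ring
  · rw [cyl_inter_shift_empty hs]
    simp only [Set.preimage_empty, Set.empty_inter, measure_empty]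
    rw [show stepW G (p n) k s = 0 from by rw [stepW, if_neg hs, zero_mul]]
    ring

/-- Well-definedness: the normalised shifted law only depends on the endpoints. -/
lemma nuM_welldef [Countable V] [Nonempty V] (hX : Measurable X) (hY : Measurable Y)
    (hXlaw : IsLazyWalkLaw G u₀ (P.map X)) (hYlaw : IsLazyWalkLaw G v₀ (P.map Y))
    (hindep : ProbabilityTheory.IndepFun X Y P) {n m n' m' : ℕ} {p r p' r' : ℕ → V}
    (hp : p n = p' n') (hr : r m = r' m')
    (h1 : P (BSet X Y n m p r) ≠ 0) (h2 : P (BSet X Y n' m' p' r') ≠ 0) :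
    (P (BSet X Y n m p r))⁻¹ • nuM P X Y n m p r =
      (P (BSet X Y n' m' p' r'))⁻¹ • nuM P X Y n' m' p' r' := by
  have hfin1 : P (BSet X Y n m p r) ≠ ⊤ := measure_ne_top _ _
  have hfin2 : P (BSet X Y n' m' p' r') ≠ ⊤ := measure_ne_top _ _
  have hsmul : ∀ (c : ENNReal) (μ : Measure ((ℕ → V) × (ℕ → V))) (S : Set _),
      (c • μ) S = c * μ S := fun c μ S => rfl
  haveI : IsProbabilityMeasure ((P (BSet X Y n m p r))⁻¹ • nuM P X Y n m p r) := by
    constructor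
    rw [hsmul, nuM_univ hX hY, ENNReal.inv_mul_cancel h1 hfin1]
  refine ext_of_generate_finite (PairCylSets V) generateFrom_pairCylSets.symm
    isPiSystem_pairCylSets ?_ ?_
  · rintro _ ⟨_, ⟨k, sfun, rfl⟩, _, ⟨l, t, rfl⟩, rfl⟩
    have e1 : ∀ c w : ENNReal, c ≠ 0 → c ≠ ⊤ → c⁻¹ * (c * w) = w := fun c w h0 ht => by
      rw [← mul_assoc, ENNReal.inv_mul_cancel h0 ht, one_mul]
    rw [hsmul, hsmul, nuM_cyl hX hY hXlaw hYlaw hindep, nuM_cyl hX hY hXlaw hYlaw hindep,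
      e1 _ _ h1 hfin1, e1 _ _ h2 hfin2, hp, hr]
  · rw [hsmul, hsmul, nuM_univ hX hY, nuM_univ hX hY,
      ENNReal.inv_mul_cancel h1 hfin1, ENNReal.inv_mul_cancel h2 hfin2]


lemma good_ae_X [Countable V] {G : SimpleGraph V} (htrans : TransientGraph G)
    (hX : Measurable X) (hXlaw : IsLazyWalkLaw G u₀ (P.map X)) :
    P {a | ¬ X a ∈ GoodSet V} = 0 := by
  haveI : IsProbabilityMeasure (P.map X) := Measure.isProbabilityMeasure_map hX.aemeasurable
  have h := htrans u₀ (P.map X) inferInstance hXlaw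
  have h2 : ∀ᵐ x ∂(P.map X), x ∈ GoodSet V := h
  have h3 : ∀ᵐ a ∂P, X a ∈ GoodSet V := (ae_map_iff hX.aemeasurable measurableSet_goodSet).mp h2
  simpa [ae_iff] using h3

lemma nuM_dSet [Countable V] (hX : Measurable X) (hY : Measurable Y)
    (hnull : P {a | ¬ (X a ∈ GoodSet V ∧ Y a ∈ GoodSet V)} = 0) (n m : ℕ) (p r : ℕ → V) :
    nuM P X Y n m p r (DSet V) =
      P ({a | (X a, Y a) ∈ DSet V} ∩ BSet X Y n m p r) := by
  rw [nuM, Measure.map_apply (measurable_pairShift hX hY n m) measurableSet_dSet,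
    Measure.restrict_apply ((measurable_pairShift hX hY n m) measurableSet_dSet)]
  set Bad := {a | ¬ (X a ∈ GoodSet V ∧ Y a ∈ GoodSet V)} with hBad
  set S1 := (fun a => (shiftP n (X a), shiftP m (Y a))) ⁻¹' DSet V
  set S2 := {a | (X a, Y a) ∈ DSet V}
  have hiff : ∀ a, a ∉ Bad → (a ∈ S1 ↔ a ∈ S2) := by
    intro a ha
    simp only [hBad, Set.mem_setOf_eq, not_not] at ha
    exact shift_dSet_iff ha.1 ha.2 n m
  apply le_antisymm
  · calc P (S1 ∩ BSet X Y n m p r) ≤ P ((S2 ∩ BSet X Y n m p r) ∪ Bad) := by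
          apply measure_mono
          intro a ⟨ha1, ha2⟩
          by_cases hb : a ∈ Bad
          · exact Or.inr hb
          · exact Or.inl ⟨(hiff a hb).mp ha1, ha2⟩
      _ ≤ P (S2 ∩ BSet X Y n m p r) + P Bad := measure_union_le _ _
      _ = P (S2 ∩ BSet X Y n m p r) := by rw [hnull, add_zero]
  · calc P (S2 ∩ BSet X Y n m p r) ≤ P ((S1 ∩ BSet X Y n m p r) ∪ Bad) := by
          apply measure_mono
          intro a ⟨ha1, ha2⟩
          by_cases hb : a ∈ Bad
          · exact Or.inr hb
          · exact Or.inl ⟨(hiff a hb).mpr ha1, ha2⟩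
      _ ≤ P (S1 ∩ BSet X Y n m p r) + P Bad := measure_union_le _ _
      _ = P (S1 ∩ BSet X Y n m p r) := by rw [hnull, add_zero]

end MeasureLemmas



end Aux

theorem stmt7 {V : Type*} [MeasurableSpace V] [DiscreteMeasurableSpace V] [Infinite V]
    (G : SimpleGraph V) (hconn : G.Connected) (hlf : ∀ v, (G.neighborSet v).Finite)
    (htrans : TransientGraph G) (hLiou : LiouvilleGraph G)
    {α : Type*} [MeasurableSpace α] (P : Measure α) [IsProbabilityMeasure P]
    (u₀ v₀ : V) (X Y : α → ℕ → V) (hX : Measurable X) (hY : Measurable Y)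
    (hXlaw : IsLazyWalkLaw G u₀ (P.map X)) (hYlaw : IsLazyWalkLaw G v₀ (P.map Y))
    (hindep : ProbabilityTheory.IndepFun X Y P)
    (hpos : 0 < P {a | {p : ℕ × ℕ | X a p.1 = Y a p.2}.Finite}) :
    P {a | {p : ℕ × ℕ | X a p.1 = Y a p.2}.Finite} = 1 := by
  haveI hcnt : Countable V := countable_of_connected hconn hlf
  set A : Set α := {a | {p : ℕ × ℕ | X a p.1 = Y a p.2}.Finite} with hA
  have hAD : A = (fun a => (X a, Y a)) ⁻¹' DSet V := rfl
  have hZ : Measurable (fun a => (X a, Y a)) := hX.prodMk hY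
  have hAmeas : MeasurableSet A := hZ measurableSet_dSet
  -- the exceptional null set
  have hnull : P {a | ¬ (X a ∈ GoodSet V ∧ Y a ∈ GoodSet V)} = 0 := by
    have h1 := good_ae_X (u₀ := u₀) htrans hX hXlaw
    have h2 := good_ae_X (u₀ := v₀) htrans hY hYlaw
    have hsub : {a | ¬ (X a ∈ GoodSet V ∧ Y a ∈ GoodSet V)} ⊆
        {a | ¬ X a ∈ GoodSet V} ∪ {a | ¬ Y a ∈ GoodSet V} := by
      intro a ha
      simp only [Set.mem_setOf_eq, not_and_or] at ha
      exact ha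
    exact measure_mono_null hsub (measure_union_null h1 h2)
  -- canonical cylinders
  let wkX : ∀ x : V, G.Walk u₀ x := fun x => (hconn.preconnected u₀ x).some
  let wkY : ∀ y : V, G.Walk v₀ y := fun y => (hconn.preconnected v₀ y).some
  let cB : V → V → Set α := fun x y =>
    BSet X Y (wkX x).length (wkY y).length (wkX x).getVert (wkY y).getVert
  have hcB_pos : ∀ x y, P (cB x y) ≠ 0 := by
    intro x y
    rw [show cB x y = BSet X Y (wkX x).length (wkY y).length (wkX x).getVert (wkY y).getVert
      from rfl, BSet_measure hX hY hXlaw hYlaw hindep]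
    exact mul_ne_zero (stepW_walk_ne_zero hlf _) (stepW_walk_ne_zero hlf _)
  let Φ : V → V → ENNReal := fun x y => (P (cB x y))⁻¹ *
    nuM P X Y (wkX x).length (wkY y).length (wkX x).getVert (wkY y).getVert (DSet V)
  -- the key identity
  have hkey : ∀ (n m : ℕ) (p r : ℕ → V),
      P (A ∩ BSet X Y n m p r) = P (BSet X Y n m p r) * Φ (p n) (r m) := by
    intro n m p r
    by_cases h0 : P (BSet X Y n m p r) = 0
    · rw [h0, zero_mul]
      exact le_antisymm ((measure_mono Set.inter_subset_right).trans h0.le) zero_le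
    · have hwd := nuM_welldef (G := G) hX hY hXlaw hYlaw hindep
        (n := n) (m := m) (p := p) (r := r)
        (n' := (wkX (p n)).length) (m' := (wkY (r m)).length)
        (p' := (wkX (p n)).getVert) (r' := (wkY (r m)).getVert)
        ((wkX (p n)).getVert_length.symm) ((wkY (r m)).getVert_length.symm)
        h0 (hcB_pos (p n) (r m))
      have happ := Measure.ext_iff.mp hwd (DSet V) measurableSet_dSet
      rw [Measure.smul_apply, Measure.smul_apply, smul_eq_mul, smul_eq_mul] at happ
      have hD := nuM_dSet hX hY hnull n m p r
      rw [hD] at happ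
      have hΦdef : Φ (p n) (r m) = (P (cB (p n) (r m)))⁻¹ *
          nuM P X Y (wkX (p n)).length (wkY (r m)).length (wkX (p n)).getVert
            (wkY (r m)).getVert (DSet V) := rfl
      have : P ({a | (X a, Y a) ∈ DSet V} ∩ BSet X Y n m p r) =
          P (BSet X Y n m p r) * Φ (p n) (r m) := by
        rw [hΦdef]
        rw [show cB (p n) (r m) = BSet X Y (wkX (p n)).length (wkY (r m)).length
          (wkX (p n)).getVert (wkY (r m)).getVert from rfl]
        rw [← happ, ← mul_assoc,
          ENNReal.mul_inv_cancel h0 (measure_ne_top _ _), one_mul]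
      exact this
  have hΦ_le_one : ∀ x y, Φ x y ≤ 1 := by
    intro x y
    calc Φ x y ≤ (P (cB x y))⁻¹ *
        nuM P X Y (wkX x).length (wkY y).length (wkX x).getVert (wkY y).getVert Set.univ :=
          mul_le_mul_right (measure_mono (Set.subset_univ _)) _
      _ = 1 := by
          rw [nuM_univ hX hY, ENNReal.inv_mul_cancel (hcB_pos x y) (measure_ne_top _ _)]
  have hΦ_ne_top : ∀ x y, Φ x y ≠ ⊤ :=
    fun x y => ((hΦ_le_one x y).trans_lt ENNReal.one_lt_top).ne
  -- one-step recursion in the first coordinate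
  have hrecX_gen : ∀ (n m : ℕ) (p r : ℕ → V), P (BSet X Y n m p r) ≠ 0 →
      Φ (p n) (r m) = ∑' x' : V, lazyStep G (p n) x' * Φ x' (r m) := by
    intro n m p r h0
    have hBunion : BSet X Y n m p r = ⋃ x' : V, BSet X Y (n + 1) m (extP n p x') r := by
      unfold BSet
      rw [cyl_eq_iUnion_extP n p, Set.preimage_iUnion, Set.iUnion_inter]
    have hdisj : Pairwise (Function.onFun Disjoint
        fun x' : V => A ∩ BSet X Y (n + 1) m (extP n p x') r) := by
      intro a b hab
      refine Disjoint.mono ?_ ?_ ((cyl_extP_disjoint n p hab).preimage X)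
      · exact fun z hz => hz.2.1
      · exact fun z hz => hz.2.1
    have hmeas : ∀ x' : V, MeasurableSet (A ∩ BSet X Y (n + 1) m (extP n p x') r) :=
      fun x' => hAmeas.inter (measurableSet_BSet hX hY _ _ _ _)
    have hsum : P (A ∩ BSet X Y n m p r) =
        ∑' x' : V, P (A ∩ BSet X Y (n + 1) m (extP n p x') r) := by
      rw [hBunion, Set.inter_iUnion, measure_iUnion hdisj hmeas]
    have hterm : ∀ x' : V, P (A ∩ BSet X Y (n + 1) m (extP n p x') r) =
        P (BSet X Y n m p r) * (lazyStep G (p n) x' * Φ x' (r m)) := by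
      intro x'
      rw [hkey (n + 1) m (extP n p x') r, extP_top,
        BSet_measure hX hY hXlaw hYlaw hindep (n + 1) m (extP n p x') r, stepW_extP,
        BSet_measure hX hY hXlaw hYlaw hindep n m p r]
      ring
    have h1 : P (BSet X Y n m p r) * Φ (p n) (r m) =
        P (BSet X Y n m p r) * ∑' x' : V, lazyStep G (p n) x' * Φ x' (r m) := by
      rw [← hkey n m p r, hsum]
      simp_rw [hterm]
      rw [ENNReal.tsum_mul_left]
    exact (ENNReal.mul_right_inj h0 (measure_ne_top _ _)).mp h1
  -- one-step recursion in the second coordinate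
  have hrecY_gen : ∀ (n m : ℕ) (p r : ℕ → V), P (BSet X Y n m p r) ≠ 0 →
      Φ (p n) (r m) = ∑' y' : V, lazyStep G (r m) y' * Φ (p n) y' := by
    intro n m p r h0
    have hBunion : BSet X Y n m p r = ⋃ y' : V, BSet X Y n (m + 1) p (extP m r y') := by
      unfold BSet
      rw [cyl_eq_iUnion_extP m r, Set.preimage_iUnion, Set.inter_iUnion]
    have hdisj : Pairwise (Function.onFun Disjoint
        fun y' : V => A ∩ BSet X Y n (m + 1) p (extP m r y')) := by
      intro a b hab
      refine Disjoint.mono ?_ ?_ ((cyl_extP_disjoint m r hab).preimage Y)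
      · exact fun z hz => hz.2.2
      · exact fun z hz => hz.2.2
    have hmeas : ∀ y' : V, MeasurableSet (A ∩ BSet X Y n (m + 1) p (extP m r y')) :=
      fun y' => hAmeas.inter (measurableSet_BSet hX hY _ _ _ _)
    have hsum : P (A ∩ BSet X Y n m p r) =
        ∑' y' : V, P (A ∩ BSet X Y n (m + 1) p (extP m r y')) := by
      rw [hBunion, Set.inter_iUnion, measure_iUnion hdisj hmeas]
    have hterm : ∀ y' : V, P (A ∩ BSet X Y n (m + 1) p (extP m r y')) =
        P (BSet X Y n m p r) * (lazyStep G (r m) y' * Φ (p n) y') := by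
      intro y'
      rw [hkey n (m + 1) p (extP m r y'), extP_top,
        BSet_measure hX hY hXlaw hYlaw hindep n (m + 1) p (extP m r y'), stepW_extP,
        BSet_measure hX hY hXlaw hYlaw hindep n m p r]
      ring
    have h1 : P (BSet X Y n m p r) * Φ (p n) (r m) =
        P (BSet X Y n m p r) * ∑' y' : V, lazyStep G (r m) y' * Φ (p n) y' := by
      rw [← hkey n m p r, hsum]
      simp_rw [hterm]
      rw [ENNReal.tsum_mul_left]
    exact (ENNReal.mul_right_inj h0 (measure_ne_top _ _)).mp h1
  have hrecX : ∀ x y : V, Φ x y = ∑' x' : V, lazyStep G x x' * Φ x' y := by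
    intro x y
    have := hrecX_gen (wkX x).length (wkY y).length (wkX x).getVert (wkY y).getVert
      (hcB_pos x y)
    rwa [(wkX x).getVert_length, (wkY y).getVert_length] at this
  have hrecY : ∀ x y : V, Φ x y = ∑' y' : V, lazyStep G y y' * Φ x y' := by
    intro x y
    have := hrecY_gen (wkX x).length (wkY y).length (wkX x).getVert (wkY y).getVert
      (hcB_pos x y)
    rwa [(wkX x).getVert_length, (wkY y).getVert_length] at this
  -- harmonicity from the recursion
  have hmk_harm : ∀ f : V → ENNReal, (∀ x, f x ≠ ⊤) →
      (∀ x, f x = ∑' x' : V, lazyStep G x x' * f x') →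
      IsHarmonic G (fun x => (f x).toReal) := by
    intro f hftop hfrec v
    -- v has a neighbour
    obtain ⟨w0, hw0⟩ := exists_ne v
    obtain ⟨wv⟩ := hconn.preconnected v w0
    have hlen : 0 < wv.length := by
      rcases Nat.eq_zero_or_pos wv.length with h | h
      · exact absurd (SimpleGraph.Walk.eq_of_length_eq_zero h) (fun hh => hw0 hh.symm)
      · exact h
    have hadj : G.Adj v (wv.getVert 1) := by
      have := wv.adj_getVert_succ hlen
      rwa [wv.getVert_zero] at this
    set T := (hlf v).toFinset with hT
    set d := (G.neighborSet v).ncard with hdd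
    have hd : 0 < d := (Set.ncard_pos (hlf v)).mpr ⟨wv.getVert 1, hadj⟩
    have hdE : ((d : ENNReal)) ≠ 0 := by exact_mod_cast hd.ne'
    have hvT : v ∉ T := by
      simp only [hT, Set.Finite.mem_toFinset, SimpleGraph.mem_neighborSet]
      exact G.irrefl
    have htsum : ∑' x' : V, lazyStep G v x' * f x' =
        ∑ x' ∈ insert v T, lazyStep G v x' * f x' := by
      refine tsum_eq_sum ?_
      intro b hb
      simp only [Finset.mem_insert, not_or] at hb
      have h1 : ¬ v = b := fun h => hb.1 h.symm
      have h2 : ¬ G.Adj v b := by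
        intro h
        exact hb.2 (by simp [hT, Set.Finite.mem_toFinset, SimpleGraph.mem_neighborSet, h])
      rw [lazyStep, if_neg h1, if_neg h2, zero_mul]
    have hEq : f v = 2⁻¹ * f v + ∑ x' ∈ T, lazyStep G v x' * f x' := by
      have := hfrec v
      rw [htsum, Finset.sum_insert hvT] at this
      rwa [show lazyStep G v v = 2⁻¹ from if_pos rfl] at this
    have hstepT : ∀ x' ∈ T, lazyStep G v x' = 2⁻¹ / (d : ENNReal) := by
      intro x' hx'
      have hadj' : G.Adj v x' := by
        simpa [hT, Set.Finite.mem_toFinset, SimpleGraph.mem_neighborSet] using hx'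
      rw [lazyStep, if_neg hadj'.ne, if_pos hadj']
    -- pass to real numbers
    have hterm_ne_top : ∀ x' ∈ T, lazyStep G v x' * f x' ≠ ⊤ :=
      fun x' _ => ENNReal.mul_ne_top (lazyStep_ne_top hlf v x') (hftop x')
    have hsum_ne_top : (∑ x' ∈ T, lazyStep G v x' * f x') ≠ ⊤ :=
      (ENNReal.sum_lt_top.mpr fun x' hx' => (hterm_ne_top x' hx').lt_top).ne
    have hreal := congrArg ENNReal.toReal hEq
    rw [ENNReal.toReal_add (ENNReal.mul_ne_top (by simp) (hftop v)) hsum_ne_top,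
      ENNReal.toReal_mul, ENNReal.toReal_sum hterm_ne_top] at hreal
    have hsum_congr : ∀ x' ∈ T, (lazyStep G v x' * f x').toReal =
        (2⁻¹ / (d : ℝ)) * (f x').toReal := by
      intro x' hx'
      rw [ENNReal.toReal_mul, hstepT x' hx', ENNReal.toReal_div]
      norm_num
    rw [Finset.sum_congr rfl hsum_congr] at hreal
    have hfin : ∑ᶠ w ∈ G.neighborSet v, (f w).toReal = ∑ x' ∈ T, (f x').toReal := by
      rw [show G.neighborSet v = (T : Set V) from (Set.Finite.coe_toFinset (hlf v)).symm,
        finsum_mem_coe_finset]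
    show (f v).toReal = (∑ᶠ w ∈ G.neighborSet v, (f w).toReal) / (d : ℝ)
    rw [hfin]
    rw [← Finset.mul_sum] at hreal
    have hdR : (0 : ℝ) < (d : ℝ) := by exact_mod_cast hd
    have h2 : (2⁻¹ : ENNReal).toReal = 2⁻¹ := by norm_num
    rw [h2] at hreal
    field_simp at hreal ⊢
    linarith
  -- Liouville: Φ is constant
  have hbdd : ∀ f : V → ENNReal, (∀ x, f x ≤ 1) → ∃ C : ℝ, ∀ x, |(f x).toReal| ≤ C := by
    intro f hf
    refine ⟨1, fun x => ?_⟩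
    rw [abs_of_nonneg ENNReal.toReal_nonneg]
    calc (f x).toReal ≤ (1 : ENNReal).toReal :=
          ENNReal.toReal_mono (by simp) (hf x)
      _ = 1 := by simp
  have hΦconst : ∀ x y : V, Φ x y = Φ u₀ v₀ := by
    intro x y
    have hne : ∀ x' y' : V, Φ x' y' ≠ ⊤ := hΦ_ne_top
    have hx : (Φ x y).toReal = (Φ u₀ y).toReal := by
      have harm := hmk_harm (fun x' => Φ x' y) (fun x' => hne x' y) (fun x' => hrecX x' y)
      exact hLiou _ harm (hbdd _ (fun x' => hΦ_le_one x' y)) x u₀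
    have hy : (Φ u₀ y).toReal = (Φ u₀ v₀).toReal := by
      have harm := hmk_harm (fun y' => Φ u₀ y') (fun y' => hne u₀ y') (fun y' => hrecY u₀ y')
      exact hLiou _ harm (hbdd _ (fun y' => hΦ_le_one u₀ y')) y v₀
    exact (ENNReal.toReal_eq_toReal_iff' (hne x y) (hne u₀ v₀)).mp (hx.trans hy)
  -- Φ u₀ v₀ = P A
  have hq : Φ u₀ v₀ = P A := by
    have hB0 : P (BSet X Y 0 0 (fun _ => u₀) (fun _ => v₀)) = 1 := by
      rw [BSet_measure hX hY hXlaw hYlaw hindep]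
      simp [stepW]
    have hkey0 := hkey 0 0 (fun _ => u₀) (fun _ => v₀)
    rw [hB0, one_mul] at hkey0
    have hAB0 : P (A ∩ BSet X Y 0 0 (fun _ => u₀) (fun _ => v₀)) = P A := by
      apply le_antisymm (measure_mono Set.inter_subset_left)
      have hcompl : P (BSet X Y 0 0 (fun _ => u₀) (fun _ => v₀))ᶜ = 0 := by
        rw [measure_compl (measurableSet_BSet hX hY _ _ _ _) (measure_ne_top _ _), hB0]
        simp
      calc P A ≤ P (A ∩ BSet X Y 0 0 (fun _ => u₀) (fun _ => v₀)) +
              P (A \ BSet X Y 0 0 (fun _ => u₀) (fun _ => v₀)) :=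
            le_of_eq (measure_inter_add_diff A (measurableSet_BSet hX hY _ _ _ _)).symm
        _ ≤ P (A ∩ BSet X Y 0 0 (fun _ => u₀) (fun _ => v₀)) + 0 := by
            gcongr
            exact measure_mono_null (Set.diff_subset_compl _ _) hcompl ▸ le_rfl
        _ = P (A ∩ BSet X Y 0 0 (fun _ => u₀) (fun _ => v₀)) := add_zero _
    rw [hAB0] at hkey0
    exact hkey0.symm
  -- final π-λ argument
  have hρ : (P.restrict A).map (fun a => (X a, Y a)) =
      (P A) • (P.map (fun a => (X a, Y a))) := by
    haveI : IsFiniteMeasure ((P.restrict A).map (fun a => (X a, Y a))) := by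
      constructor
      rw [Measure.map_apply hZ MeasurableSet.univ, Set.preimage_univ,
        Measure.restrict_apply MeasurableSet.univ, Set.univ_inter]
      exact measure_lt_top _ _
    refine ext_of_generate_finite (PairCylSets V) generateFrom_pairCylSets.symm
      isPiSystem_pairCylSets ?_ ?_
    · rintro _ ⟨_, ⟨k, sfun, rfl⟩, _, ⟨l, t, rfl⟩, rfl⟩
      have hRmeas : MeasurableSet (Cyl k sfun ×ˢ Cyl l t) :=
        (measurableSet_cyl k sfun).prod (measurableSet_cyl l t)
      have hpre : (fun a => (X a, Y a)) ⁻¹' (Cyl k sfun ×ˢ Cyl l t) = BSet X Y k l sfun t :=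
        rfl
      rw [Measure.map_apply hZ hRmeas, Measure.restrict_apply (hZ hRmeas), hpre,
        Set.inter_comm, hkey k l sfun t, hΦconst, hq, Measure.smul_apply, smul_eq_mul,
        Measure.map_apply hZ hRmeas, hpre, mul_comm]
    · rw [Measure.map_apply hZ MeasurableSet.univ, Set.preimage_univ,
        Measure.restrict_apply MeasurableSet.univ, Set.univ_inter, Measure.smul_apply,
        smul_eq_mul, Measure.map_apply hZ MeasurableSet.univ, Set.preimage_univ,
        measure_univ, mul_one]
  have happD := Measure.ext_iff.mp hρ (DSet V) measurableSet_dSet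
  rw [Measure.map_apply hZ measurableSet_dSet,
    Measure.restrict_apply (hZ measurableSet_dSet), ← hAD, Set.inter_self,
    Measure.smul_apply, smul_eq_mul, Measure.map_apply hZ measurableSet_dSet, ← hAD] at happD
  -- P A = P A * P A implies P A = 1
  have hPA : P A = P A * P A := happD
  have h1 : P A * 1 = P A * P A := by rw [mul_one]; exact hPA
  exact ((ENNReal.mul_right_inj hpos.ne' (measure_ne_top P A)).mp h1).symm
end
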